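/- arXiv:2601.00934 — 8 statements merged into one kernel-verified Lean document; each statement's English description precedes it below -/
import Mathlib

section
/- Let X be a real Hilbert space, K ⊆ X a nonempty closed convex set, y ∈ X, and let A : K → X be Lipschitz continuous (there exists M > 0 with ‖A b₁ − A b₂‖ ≤ M‖b₁ − b₂‖ for all b₁, b₂ ∈ K) and strongly monotone (there exists m > 0 with ⟨A b₁ − A b₂, b₁ − b₂⟩ ≥ m‖b₁ − b₂‖² for all b₁, b₂ ∈ K). Let j : K → ℝ be convex and lower semicontinuous. Then there exists a unique element b ∈ K such that ⟨A b, a − b⟩ + j(a) − j(b) ≥ ⟨y, a − b⟩ for all a ∈ K. -/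
open RealInnerProductSpace Filter Topology

/-- A convex lsc function on a nonempty closed convex set has an affine minorant. -/
theorem evi_minorant {X : Type*} [NormedAddCommGroup X] [NormedSpace ℝ X]
    (K : Set X) (hK : K.Nonempty) (hKcl : IsClosed K) (hKcv : Convex ℝ K)
    (j : X → ℝ) (hjcv : ConvexOn ℝ K j) (hjlsc : LowerSemicontinuousOn j K) :
    ∃ α β : ℝ, 0 ≤ β ∧ ∀ x ∈ K, α - β * ‖x‖ ≤ j x := by
  obtain ⟨x₀, hx₀⟩ := hK
  set E : Set (X × ℝ) := {p | p.1 ∈ K ∧ j p.1 ≤ p.2} with hE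
  have hEcv : Convex ℝ E := by
    rintro ⟨p, s⟩ ⟨hp, hps⟩ ⟨q, t⟩ ⟨hq, hqt⟩ a b ha hb hab
    refine ⟨hKcv hp hq ha hb hab, ?_⟩
    calc j (a • p + b • q) ≤ a * j p + b * j q := hjcv.2 hp hq ha hb hab
      _ ≤ a * s + b * t := by
          have := mul_le_mul_of_nonneg_left hps ha
          have := mul_le_mul_of_nonneg_left hqt hb
          simp only [Prod.fst, smul_eq_mul] at *
          linarith
  have hEcl : IsClosed E := by
    apply IsSeqClosed.isClosed
    intro f p hf hfp
    have h1 : Tendsto (fun n => (f n).1) atTop (nhds p.1) :=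
      (continuous_fst.tendsto p).comp hfp
    have h2 : Tendsto (fun n => (f n).2) atTop (nhds p.2) :=
      (continuous_snd.tendsto p).comp hfp
    have hpK : p.1 ∈ K := hKcl.mem_of_tendsto h1 (Filter.Eventually.of_forall fun n => (hf n).1)
    refine ⟨hpK, ?_⟩
    by_contra hcon
    push_neg at hcon
    set c := (p.2 + j p.1) / 2 with hc
    have hc1 : c < j p.1 := by rw [hc]; linarith
    have hc2 : p.2 < c := by rw [hc]; linarith
    have hev := hjlsc p.1 hpK c hc1
    have h1' : Tendsto (fun n => (f n).1) atTop (nhdsWithin p.1 K) :=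
      tendsto_nhdsWithin_of_tendsto_nhds_of_eventually_within _ h1
        (Filter.Eventually.of_forall fun n => (hf n).1)
    have hev2 : ∀ᶠ n in Filter.atTop, c < (f n).2 := by
      filter_upwards [h1'.eventually hev] with n hn
      exact lt_of_lt_of_le hn (hf n).2
    have : c ≤ p.2 := ge_of_tendsto h2 (hev2.mono fun n hn => hn.le)
    linarith
  have hpt : ((x₀, j x₀ - 1) : X × ℝ) ∉ E := by
    rintro ⟨-, h⟩
    simp only at h
    linarith
  obtain ⟨f, u, hfu, hfE⟩ := geometric_hahn_banach_point_closed hEcv hEcl hpt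
  set c := f ((0 : X), (1 : ℝ)) with hcdef
  have hlin : ∀ (x : X) (t : ℝ), f (x, t) = f (x, 0) + t * c := by
    intro x t
    have : ((x, t) : X × ℝ) = (x, 0) + t • ((0 : X), (1 : ℝ)) := by
      simp [Prod.ext_iff]
    rw [this, map_add, map_smul, smul_eq_mul]
  have hcne : c ≠ 0 := by
    intro h0
    have h1 : u < f (x₀, j x₀) := hfE _ ⟨hx₀, le_refl _⟩
    have h2 : f (x₀, j x₀ - 1) < u := hfu
    rw [hlin, h0] at h1 h2
    linarith
  have hcnonneg : 0 ≤ c := by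
    by_contra hcneg
    push_neg at hcneg
    set t := max (j x₀) ((u - f (x₀, 0)) / c) with ht
    have h1 : u < f (x₀, t) := hfE (x₀, t) ⟨hx₀, le_max_left _ _⟩
    rw [hlin] at h1
    have h2 : t * c ≤ ((u - f (x₀, 0)) / c) * c :=
      mul_le_mul_of_nonpos_right (le_max_right _ _) hcneg.le
    rw [div_mul_cancel₀ _ hcne] at h2
    linarith
  have hcpos : 0 < c := lt_of_le_of_ne hcnonneg (Ne.symm hcne)
  refine ⟨u / c, ‖f‖ / c, div_nonneg (norm_nonneg f) hcpos.le, fun x hx => ?_⟩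
  have h1 : u < f (x, 0) + j x * c := by
    have := hfE (x, j x) ⟨hx, le_refl (j x)⟩
    rwa [hlin] at this
  have h2 : ‖f (x, 0)‖ ≤ ‖f‖ * ‖x‖ := by
    have := f.le_opNorm (x, 0)
    have hn : ‖((x, 0) : X × ℝ)‖ = ‖x‖ := by simp [Prod.norm_def]
    rwa [hn] at this
  have h3 : f (x, 0) ≤ ‖f‖ * ‖x‖ := le_trans (le_abs_self _) (by rwa [← Real.norm_eq_abs])
  have h4 : u - ‖f‖ * ‖x‖ ≤ j x * c := by linarith
  calc u / c - ‖f‖ / c * ‖x‖ = (u - ‖f‖ * ‖x‖) / c := by ring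
    _ ≤ (j x * c) / c := by gcongr
    _ = j x := mul_div_cancel_right₀ _ hcne

/-- Existence of the minimizer of `x ↦ ‖x - z‖² + 2 j x` over `K`, characterized by
its variational inequality. -/
theorem evi_prox {X : Type*} [NormedAddCommGroup X] [InnerProductSpace ℝ X] [CompleteSpace X]
    (K : Set X) (hK : K.Nonempty) (hKcl : IsClosed K) (hKcv : Convex ℝ K)
    (j : X → ℝ) (hjcv : ConvexOn ℝ K j) (hjlsc : LowerSemicontinuousOn j K) (z : X) :
    ∃ w ∈ K, ∀ a ∈ K, 0 ≤ ⟪w - z, a - w⟫ + j a - j w := by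
  obtain ⟨α, β, hβ, hmin⟩ := evi_minorant K hK hKcl hKcv j hjcv hjlsc
  obtain ⟨g, hg⟩ : ∃ g : X → ℝ, g = fun x => ‖x - z‖ ^ 2 + 2 * j x := ⟨_, rfl⟩
  have hgdef : ∀ x, g x = ‖x - z‖ ^ 2 + 2 * j x := fun x => by rw [hg]
  have glb : ∀ x ∈ K, ‖z‖ ^ 2 + 2 * α - (‖z‖ + β) ^ 2 ≤ g x := by
    intro x hx
    have h1 := hmin x hx
    have h2 : ‖x‖ - ‖z‖ ≤ ‖x - z‖ := norm_sub_norm_le x z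
    have h5 : (0:ℝ) ≤ ‖x - z‖ := norm_nonneg _
    have h6 : (0:ℝ) ≤ ‖x‖ := norm_nonneg _
    have h7 : (0:ℝ) ≤ ‖z‖ := norm_nonneg _
    rw [hgdef]
    rcases le_or_gt ‖x‖ ‖z‖ with hle | hlt
    · have hmul : β * ‖x‖ ≤ β * ‖z‖ := mul_le_mul_of_nonneg_left hle hβ
      nlinarith [sq_nonneg (‖x - z‖), sq_nonneg β]
    · have hsub : (0:ℝ) ≤ ‖x‖ - ‖z‖ := by linarith
      have hB : (‖x‖ - ‖z‖) ^ 2 ≤ ‖x - z‖ ^ 2 := pow_le_pow_left₀ hsub h2 2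
      nlinarith [sq_nonneg (‖x‖ - ‖z‖ - β), hB]
  have hbdd : BddBelow (g '' K) := ⟨_, by rintro _ ⟨x, hx, rfl⟩; exact glb x hx⟩
  obtain ⟨δ, hδ⟩ : ∃ δ : ℝ, δ = sInf (g '' K) := ⟨_, rfl⟩
  have hδx : ∀ x ∈ K, δ ≤ g x := fun x hx => hδ ▸ csInf_le hbdd ⟨x, hx, rfl⟩
  have hseq : ∀ n : ℕ, ∃ x, x ∈ K ∧ g x < δ + 1 / (n + 1) := by
    intro n
    have hpos : sInf (g '' K) < δ + 1 / (n + 1) := by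
      have : (0:ℝ) < 1 / (n + 1) := by positivity
      rw [← hδ]; linarith
    obtain ⟨_, ⟨x, hx, rfl⟩, hlt⟩ := exists_lt_of_csInf_lt (hK.image g) hpos
    exact ⟨x, hx, hlt⟩
  choose u hu hgu using hseq
  -- midpoint estimate
  have hmid : ∀ x ∈ K, ∀ v ∈ K, ‖x - v‖ ^ 2 ≤ 2 * g x + 2 * g v - 4 * δ := by
    intro x hx v hv
    have hwK : (1/2 : ℝ) • x + (1/2 : ℝ) • v ∈ K :=
      hKcv hx hv (by norm_num) (by norm_num) (by norm_num)
    have hjw : j ((1/2 : ℝ) • x + (1/2 : ℝ) • v) ≤ (1/2) * j x + (1/2) * j v :=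
      hjcv.2 hx hv (by norm_num) (by norm_num) (by norm_num)
    have hpar := parallelogram_law_with_norm ℝ (x - z) (v - z)
    have hwz : (1/2 : ℝ) • x + (1/2 : ℝ) • v - z = (1/2 : ℝ) • ((x - z) + (v - z)) := by
      module
    have hnwz : ‖(1/2 : ℝ) • x + (1/2 : ℝ) • v - z‖ = (1/2) * ‖(x - z) + (v - z)‖ := by
      rw [hwz, norm_smul]; simp
    have hxv : x - v = (x - z) - (v - z) := by abel
    have hδw := hδx _ hwK
    rw [hgdef] at hδw
    rw [hnwz] at hδw
    have hpar2 : ‖x - z + (v - z)‖ ^ 2 + ‖x - z - (v - z)‖ ^ 2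
        = 2 * (‖x - z‖ ^ 2 + ‖v - z‖ ^ 2) := by
      simp only [pow_two]; linarith [hpar]
    rw [hxv, hgdef, hgdef]
    nlinarith [hδw, hpar2, hjw]
  have hcauchy : CauchySeq u := by
    rw [Metric.cauchySeq_iff]
    intro ε hε
    obtain ⟨N, hN⟩ := exists_nat_gt (4 / ε ^ 2)
    refine ⟨N, fun a ha b hb => ?_⟩
    have h1 : g (u a) < δ + 1 / (a + 1) := hgu a
    have h2 : g (u b) < δ + 1 / (b + 1) := hgu b
    have hd2 : ‖u a - u b‖ ^ 2 ≤ 2 * g (u a) + 2 * g (u b) - 4 * δ := hmid _ (hu a) _ (hu b)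
    have hNa : 1 / ((a:ℝ) + 1) ≤ 1 / ((N:ℝ) + 1) := by
      apply one_div_le_one_div_of_le (by positivity)
      exact_mod_cast Nat.succ_le_succ ha
    have hNb : 1 / ((b:ℝ) + 1) ≤ 1 / ((N:ℝ) + 1) := by
      apply one_div_le_one_div_of_le (by positivity)
      exact_mod_cast Nat.succ_le_succ hb
    have hNpos : (0:ℝ) < (N:ℝ) + 1 := by positivity
    have hN' : 4 / ((N:ℝ) + 1) < ε ^ 2 := by
      rw [div_lt_iff₀ hNpos]
      have h4 : 4 / ε ^ 2 < (N:ℝ) + 1 := hN.trans (by linarith)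
      rw [div_lt_iff₀ (by positivity)] at h4
      linarith
    have hd2' : ‖u a - u b‖ ^ 2 < ε ^ 2 := by
      have e4 : (4:ℝ) / ((N:ℝ)+1) = 2 * (1/((N:ℝ)+1)) + 2 * (1/((N:ℝ)+1)) := by ring
      have ea : (2:ℝ) / ((a:ℝ)+1) = 2 * (1/((a:ℝ)+1)) := by ring
      have eb : (2:ℝ) / ((b:ℝ)+1) = 2 * (1/((b:ℝ)+1)) := by ring
      nlinarith [hNa, hNb]
    rw [dist_eq_norm]
    nlinarith [norm_nonneg (u a - u b), hd2', hε]
  obtain ⟨w, hwlim⟩ := cauchySeq_tendsto_of_complete hcauchy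
  have hwK : w ∈ K := hKcl.mem_of_tendsto hwlim (Filter.Eventually.of_forall hu)
  -- lower semicontinuity: g w ≤ δ
  have hgw : g w ≤ δ := by
    by_contra hcon
    push_neg at hcon
    obtain ⟨c3, hc3⟩ : ∃ c3 : ℝ, c3 = (g w - δ) / 4 := ⟨_, rfl⟩
    have hc3pos : 0 < c3 := by rw [hc3]; linarith
    have hjev : ∀ᶠ x in nhdsWithin w K, j w - c3 < j x :=
      hjlsc w hwK (j w - c3) (by linarith)
    have hnormev : ∀ᶠ x in nhds w, ‖w - z‖ ^ 2 - c3 < ‖x - z‖ ^ 2 := by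
      have hcont : Filter.Tendsto (fun x => ‖x - z‖ ^ 2) (nhds w) (nhds (‖w - z‖ ^ 2)) :=
        (((continuous_id.sub continuous_const).norm.pow 2)).tendsto w
      exact hcont.eventually (eventually_gt_nhds (by linarith))
    have hlimw : Filter.Tendsto u Filter.atTop (nhdsWithin w K) :=
      tendsto_nhdsWithin_of_tendsto_nhds_of_eventually_within _ hwlim
        (Filter.Eventually.of_forall hu)
    have hsmall : ∀ᶠ n : ℕ in Filter.atTop, 1 / ((n:ℝ) + 1) < c3 := by
      have := tendsto_one_div_add_atTop_nhds_zero_nat (𝕜 := ℝ)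
      exact this.eventually (eventually_lt_nhds hc3pos)
    obtain ⟨n, h1, h2, h3⟩ := (((hlimw.eventually hjev).and
      ((hwlim.eventually hnormev).and hsmall)).exists)
    have h4 : g (u n) < δ + 1 / ((n:ℝ) + 1) := hgu n
    rw [hgdef] at h4
    rw [hgdef] at hcon
    rw [hgdef] at hc3
    linarith
  -- variational inequality
  refine ⟨w, hwK, fun a ha => ?_⟩
  by_contra hS
  push_neg at hS
  have key : ∀ t : ℝ, 0 < t → t ≤ 1 →
      0 ≤ (⟪w - z, a - w⟫ + j a - j w) + t / 2 * ‖a - w‖ ^ 2 := by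
    intro t ht ht1
    have heq : w + t • (a - w) = (1 - t) • w + t • a := by module
    have hutK : w + t • (a - w) ∈ K := by
      rw [heq]; exact hKcv hwK ha (by linarith) ht.le (by ring)
    have hjut : j (w + t • (a - w)) ≤ (1 - t) * j w + t * j a := by
      rw [heq]; exact hjcv.2 hwK ha (by linarith) ht.le (by ring)
    have hnut : ‖w + t • (a - w) - z‖ ^ 2
        = ‖w - z‖ ^ 2 + 2 * t * ⟪w - z, a - w⟫ + t ^ 2 * ‖a - w‖ ^ 2 := by
      have h0 : w + t • (a - w) - z = (w - z) + t • (a - w) := by abel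
      rw [h0, norm_add_sq_real, real_inner_smul_right, norm_smul]
      rw [Real.norm_eq_abs, abs_of_pos ht, mul_pow]
      ring
    have hge : g w ≤ g (w + t • (a - w)) := hgw.trans (hδx _ hutK)
    rw [hgdef, hgdef] at hge
    nlinarith [hge, hnut, hjut, ht]
  rcases (sq_nonneg ‖a - w‖ : (0:ℝ) ≤ ‖a - w‖ ^ 2).eq_or_lt' with hQ0 | hQpos
  · have h1 := key 1 one_pos le_rfl
    rw [← hQ0] at h1
    simp at h1
    linarith
  · have htpos : 0 < min 1 (-(⟪w - z, a - w⟫ + j a - j w) / ‖a - w‖ ^ 2) :=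
      lt_min one_pos (div_pos (by linarith) hQpos)
    have h1 := key _ htpos (min_le_left _ _)
    have h2 : min 1 (-(⟪w - z, a - w⟫ + j a - j w) / ‖a - w‖ ^ 2) * ‖a - w‖ ^ 2
        ≤ -(⟪w - z, a - w⟫ + j a - j w) := by
      have h3 := mul_le_mul_of_nonneg_right
        (min_le_right 1 (-(⟪w - z, a - w⟫ + j a - j w) / ‖a - w‖ ^ 2)) hQpos.le
      rwa [div_mul_cancel₀ _ (ne_of_gt hQpos)] at h3
    nlinarith [h1, h2, htpos]

/-- Existence and uniqueness of the solution of an elliptic variational inequality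
of the second kind: `X` a real Hilbert space, `K ⊆ X` nonempty closed convex,
`A` Lipschitz continuous and strongly monotone on `K`, `j` convex and lower
semicontinuous on `K`. Then there is a unique `b ∈ K` with
`⟨A b, a − b⟩ + j a − j b ≥ ⟨y, a − b⟩` for all `a ∈ K`. -/
theorem stmt1 {X : Type*} [NormedAddCommGroup X] [InnerProductSpace ℝ X] [CompleteSpace X]
    (K : Set X) (hK : K.Nonempty) (hKcl : IsClosed K) (hKcv : Convex ℝ K)
    (y : X) (A : X → X)
    (M : ℝ) (hM : 0 < M)
    (hLip : ∀ b₁ ∈ K, ∀ b₂ ∈ K, ‖A b₁ - A b₂‖ ≤ M * ‖b₁ - b₂‖)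
    (m : ℝ) (hm : 0 < m)
    (hmono : ∀ b₁ ∈ K, ∀ b₂ ∈ K, m * ‖b₁ - b₂‖ ^ 2 ≤ (inner ℝ (A b₁ - A b₂) (b₁ - b₂) : ℝ))
    (j : X → ℝ) (hjcv : ConvexOn ℝ K j) (hjlsc : LowerSemicontinuousOn j K) :
    ∃! b : X, b ∈ K ∧ ∀ a ∈ K,
      (inner ℝ (A b) (a - b) : ℝ) + j a - j b ≥ (inner ℝ y (a - b) : ℝ) := by
  obtain ⟨ρ, hρdef⟩ : ∃ ρ : ℝ, ρ = m / M ^ 2 := ⟨_, rfl⟩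
  have hρ : 0 < ρ := by rw [hρdef]; positivity
  have hjρcv : ConvexOn ℝ K (fun x => ρ * j x) := by
    simpa [smul_eq_mul] using hjcv.smul hρ.le
  have hjρlsc : LowerSemicontinuousOn (fun x => ρ * j x) K := by
    intro x hx b hb
    have hb' : b / ρ < j x := by rwa [div_lt_iff₀' hρ]
    filter_upwards [hjlsc x hx (b / ρ) hb'] with x' hx'
    rwa [gt_iff_lt, div_lt_iff₀' hρ] at hx'
  have prox := fun z => evi_prox K hK hKcl hKcv _ hjρcv hjρlsc z
  choose P hPK hPvi using prox
  -- P is nonexpansive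
  have hne : ∀ z₁ z₂, ‖P z₁ - P z₂‖ ≤ ‖z₁ - z₂‖ := by
    intro z₁ z₂
    have h1 := hPvi z₁ (P z₂) (hPK z₂)
    have h2 := hPvi z₂ (P z₁) (hPK z₁)
    have hkey : ‖P z₁ - P z₂‖ ^ 2 ≤ ⟪z₁ - z₂, P z₁ - P z₂⟫ := by
      have e' : ⟪P z₁ - z₁, P z₂ - P z₁⟫ = -⟪P z₁ - z₁, P z₁ - P z₂⟫ := by
        rw [← inner_neg_right]; congr 1; abel
      rw [e'] at h1
      have hsum : 0 ≤ ⟪(z₁ - z₂) - (P z₁ - P z₂), P z₁ - P z₂⟫ := by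
        have e : (z₁ - z₂) - (P z₁ - P z₂) = (P z₂ - z₂) - (P z₁ - z₁) := by abel
        rw [e, inner_sub_left]
        linarith
      rw [inner_sub_left, real_inner_self_eq_norm_sq] at hsum
      linarith
    have hCS := real_inner_le_norm (z₁ - z₂) (P z₁ - P z₂)
    nlinarith [norm_nonneg (P z₁ - P z₂), norm_nonneg (z₁ - z₂), hkey, hCS]
  -- contraction estimate
  obtain ⟨cm, hcm⟩ : ∃ c : ℝ, c = max 0 (1 - m ^ 2 / M ^ 2) := ⟨_, rfl⟩
  have hcm0 : 0 ≤ cm := hcm ▸ le_max_left _ _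
  have hcm1 : cm < 1 := by
    rw [hcm]
    apply max_lt one_pos
    have : 0 < m ^ 2 / M ^ 2 := by positivity
    linarith
  have hcontr : ∀ b₁ ∈ K, ∀ b₂ ∈ K,
      ‖P (b₁ - ρ • (A b₁ - y)) - P (b₂ - ρ • (A b₂ - y))‖ ≤ Real.sqrt cm * ‖b₁ - b₂‖ := by
    intro b₁ hb₁ b₂ hb₂
    have h0 := hne (b₁ - ρ • (A b₁ - y)) (b₂ - ρ • (A b₂ - y))
    have hz : (b₁ - ρ • (A b₁ - y)) - (b₂ - ρ • (A b₂ - y))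
        = (b₁ - b₂) - ρ • (A b₁ - A b₂) := by module
    rw [hz] at h0
    have hsq : ‖(b₁ - b₂) - ρ • (A b₁ - A b₂)‖ ^ 2 ≤ cm * ‖b₁ - b₂‖ ^ 2 := by
      rw [norm_sub_sq_real, real_inner_smul_right, norm_smul, Real.norm_eq_abs,
        abs_of_pos hρ, mul_pow]
      have hin := hmono b₁ hb₁ b₂ hb₂
      have hlip := hLip b₁ hb₁ b₂ hb₂
      have hlip2 : ‖A b₁ - A b₂‖ ^ 2 ≤ M ^ 2 * ‖b₁ - b₂‖ ^ 2 := by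
        have := pow_le_pow_left₀ (norm_nonneg _) hlip 2
        rwa [mul_pow] at this
      have hrw : ⟪b₁ - b₂, A b₁ - A b₂⟫ = ⟪A b₁ - A b₂, b₁ - b₂⟫ := real_inner_comm _ _
      rw [hrw]
      have hMne : M ≠ 0 := ne_of_gt hM
      have hρm : ρ * m = m ^ 2 / M ^ 2 := by rw [hρdef]; field_simp
      have hρM : ρ ^ 2 * M ^ 2 = m ^ 2 / M ^ 2 := by rw [hρdef]; field_simp
      have hcmge : 1 - m ^ 2 / M ^ 2 ≤ cm := hcm ▸ le_max_right _ _
      nlinarith [mul_le_mul_of_nonneg_left hin hρ.le,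
        mul_le_mul_of_nonneg_left hlip2 (sq_nonneg ρ),
        hρm, hρM, mul_le_mul_of_nonneg_right hcmge (sq_nonneg ‖b₁ - b₂‖)]
    calc ‖P (b₁ - ρ • (A b₁ - y)) - P (b₂ - ρ • (A b₂ - y))‖
        ≤ ‖(b₁ - b₂) - ρ • (A b₁ - A b₂)‖ := h0
      _ = Real.sqrt (‖(b₁ - b₂) - ρ • (A b₁ - A b₂)‖ ^ 2) :=
          (Real.sqrt_sq (norm_nonneg _)).symm
      _ ≤ Real.sqrt (cm * ‖b₁ - b₂‖ ^ 2) := Real.sqrt_le_sqrt hsq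
      _ = Real.sqrt cm * ‖b₁ - b₂‖ := by
          rw [Real.sqrt_mul hcm0, Real.sqrt_sq (norm_nonneg _)]
  -- Banach fixed point
  have hmaps : Set.MapsTo (fun b => P (b - ρ • (A b - y))) K K := fun b _ => hPK _
  have hcompl : IsComplete K := hKcl.isComplete
  have hκ1 : (⟨Real.sqrt cm, Real.sqrt_nonneg _⟩ : NNReal) < 1 := by
    apply NNReal.coe_lt_coe.mp
    push_cast
    calc Real.sqrt cm < Real.sqrt 1 := Real.sqrt_lt_sqrt hcm0 hcm1
      _ = 1 := Real.sqrt_one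
  have hcontracting : ContractingWith ⟨Real.sqrt cm, Real.sqrt_nonneg _⟩
      (hmaps.restrict _ K K) := by
    refine ⟨hκ1, LipschitzWith.of_dist_le_mul ?_⟩
    rintro ⟨x, hx⟩ ⟨x', hx'⟩
    simp only [Set.MapsTo.restrict, Subtype.dist_eq, dist_eq_norm,
      Set.MapsTo.val_restrict_apply]
    exact hcontr x hx x' hx'
  obtain ⟨x₀, hx₀⟩ := hK
  obtain ⟨b, hbK, hfix, -, -⟩ := ContractingWith.exists_fixedPoint' hcompl hmaps
    hcontracting hx₀ (edist_ne_top _ _)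
  -- b solves the variational inequality
  have hsol : ∀ a ∈ K, (inner ℝ (A b) (a - b) : ℝ) + j a - j b ≥ (inner ℝ y (a - b) : ℝ) := by
    intro a ha
    have h1 := hPvi (b - ρ • (A b - y)) a ha
    have hfix' : P (b - ρ • (A b - y)) = b := hfix
    rw [hfix'] at h1
    have e1 : b - (b - ρ • (A b - y)) = ρ • (A b - y) := by abel
    rw [e1, real_inner_smul_left] at h1
    have h2 : 0 ≤ ⟪A b - y, a - b⟫ + j a - j b := by
      by_contra hneg
      push_neg at hneg
      linarith [mul_neg_of_pos_of_neg hρ hneg]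
    rw [inner_sub_left] at h2
    linarith
  refine ⟨b, ⟨hbK, hsol⟩, ?_⟩
  rintro b' ⟨hb'K, hb'vi⟩
  have h1 := hb'vi b hbK
  have h2 := hsol b' hb'K
  have hmm := hmono b' hb'K b hbK
  have f1 : (inner ℝ y (b - b') : ℝ) = -(inner ℝ y (b' - b) : ℝ) := by
    rw [← inner_neg_right]; congr 1; abel
  have f2 : (inner ℝ (A b) (b' - b) : ℝ) = -(inner ℝ (A b) (b - b') : ℝ) := by
    rw [← inner_neg_right]; congr 1; abel
  have f3 : (inner ℝ (A b' - A b) (b - b') : ℝ)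
      = (inner ℝ (A b') (b - b') : ℝ) - (inner ℝ (A b) (b - b') : ℝ) := inner_sub_left _ _ _
  have f4 : (inner ℝ (A b' - A b) (b' - b) : ℝ) = -(inner ℝ (A b' - A b) (b - b') : ℝ) := by
    rw [← inner_neg_right]; congr 1; abel
  have h5 : ‖b' - b‖ ^ 2 ≤ 0 := by nlinarith [hmm, hm]
  have h6 : ‖b' - b‖ ^ 2 = 0 := le_antisymm h5 (sq_nonneg _)
  have h7 : b' - b = 0 := by
    rw [pow_eq_zero_iff two_ne_zero, norm_eq_zero] at h6
    exact h6
  exact sub_eq_zero.mp h7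
end

section
/- Let X be a real Banach space, T > 0, and let Λ : C([0,T]; X) → C([0,T]; X) be an operator for which there exist constants l ∈ [0, 1) and L ≥ 0 such that for all a, b ∈ C([0,T]; X) and all t ∈ [0,T], ‖Λa(t) − Λb(t)‖_X ≤ l‖a(t) − b(t)‖_X + L ∫₀ᵗ ‖a(s) − b(s)‖_X ds. Then Λ has a unique fixed point in C([0,T]; X). -/
open scoped ContinuousMap

/-- Fixed point theorem for almost history-dependent operators: if
`Λ : C([0,T]; X) → C([0,T]; X)` satisfies, for some `l ∈ [0,1)` and `L ≥ 0`,
`‖Λa(t) − Λb(t)‖ ≤ l‖a(t) − b(t)‖ + L ∫₀ᵗ ‖a(s) − b(s)‖ ds` for all `a, b` and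
`t ∈ [0,T]`, then `Λ` has a unique fixed point. -/
theorem stmt2 {X : Type*} [NormedAddCommGroup X] [NormedSpace ℝ X] [CompleteSpace X]
    (T : ℝ) (hT : 0 < T)
    (Λ : C(Set.Icc (0:ℝ) T, X) → C(Set.Icc (0:ℝ) T, X))
    (l L : ℝ) (hl0 : 0 ≤ l) (hl1 : l < 1) (hL : 0 ≤ L)
    (h : ∀ a b : C(Set.Icc (0:ℝ) T, X), ∀ t : Set.Icc (0:ℝ) T,
      ‖Λ a t - Λ b t‖ ≤ l * ‖a t - b t‖ +
        L * ∫ s in (0:ℝ)..(t:ℝ),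
          ‖a (Set.projIcc 0 T hT.le s) - b (Set.projIcc 0 T hT.le s)‖) :
    ∃! a : C(Set.Icc (0:ℝ) T, X), Λ a = a := by
  have hl' : (0:ℝ) < 1 - l := by linarith
  set μ : ℝ := (2 * L + 1) / (1 - l) with hμdef
  have hμ : 0 < μ := div_pos (by linarith) hl'
  have hLμ : L / μ ≤ (1 - l) / 2 := by
    rw [hμdef, div_div_eq_mul_div, div_le_div_iff₀ (by linarith) (by norm_num)]
    nlinarith
  -- the weight maps
  let W : C(Set.Icc (0:ℝ) T, X) → C(Set.Icc (0:ℝ) T, X) := fun a =>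
    ⟨fun t => Real.exp (-(μ * (t : ℝ))) • a t, by fun_prop⟩
  let W' : C(Set.Icc (0:ℝ) T, X) → C(Set.Icc (0:ℝ) T, X) := fun a =>
    ⟨fun t => Real.exp (μ * (t : ℝ)) • a t, by fun_prop⟩
  have hWW' : ∀ a, W (W' a) = a := by
    intro a; ext t
    simp [W, W', smul_smul, ← Real.exp_add]
  have hW'W : ∀ a, W' (W a) = a := by
    intro a; ext t
    simp [W, W', smul_smul, ← Real.exp_add]
  set Φ : C(Set.Icc (0:ℝ) T, X) → C(Set.Icc (0:ℝ) T, X) := fun a => W (Λ (W' a)) with hΦdef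
  have hK : ContractingWith ⟨(1 + l) / 2, by positivity⟩ Φ := by
    constructor
    · apply NNReal.coe_lt_coe.mp
      show (1 + l) / 2 < (1 : NNReal)
      push_cast
      linarith
    · apply LipschitzWith.of_dist_le_mul
      intro u v
      show dist (Φ u) (Φ v) ≤ (1 + l) / 2 * dist u v
      rw [ContinuousMap.dist_le (by positivity)]
      intro t
      set a := W' u
      set b := W' v
      have ht0 : (0:ℝ) ≤ (t : ℝ) := t.2.1
      have htT : (t : ℝ) ≤ T := t.2.2
      set Em : ℝ := Real.exp (-(μ * (t : ℝ))) with hEm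
      set Ep : ℝ := Real.exp (μ * (t : ℝ)) with hEp
      have hEmEp : Em * Ep = 1 := by
        rw [hEm, hEp, ← Real.exp_add]; simp
      have hEmpos : 0 < Em := Real.exp_pos _
      have hEm1 : Em ≤ 1 := Real.exp_le_one_iff.mpr (by nlinarith)
      have hEp1 : 1 ≤ Ep := Real.one_le_exp (by nlinarith)
      -- pointwise norm identity
      have hdist : dist (Φ u t) (Φ v t) = Em * ‖Λ a t - Λ b t‖ := by
        rw [dist_eq_norm]
        show ‖Em • Λ a t - Em • Λ b t‖ = Em * ‖Λ a t - Λ b t‖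
        rw [← smul_sub, norm_smul, Real.norm_eq_abs, abs_of_pos hEmpos]
      -- bound the integrand
      have hint : ∀ s ∈ Set.Icc (0:ℝ) (t : ℝ),
          ‖a (Set.projIcc 0 T hT.le s) - b (Set.projIcc 0 T hT.le s)‖ ≤
            Real.exp (μ * s) * dist u v := by
        intro s hs
        have hsT : s ∈ Set.Icc (0:ℝ) T := ⟨hs.1, hs.2.trans htT⟩
        have hproj : ((Set.projIcc 0 T hT.le s : Set.Icc (0:ℝ) T) : ℝ) = s := by
          rw [Set.projIcc_of_mem hT.le hsT]
        set p := Set.projIcc 0 T hT.le s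
        have : a p - b p = Real.exp (μ * s) • (u p - v p) := by
          show Real.exp (μ * (p:ℝ)) • u p - Real.exp (μ * (p:ℝ)) • v p = _
          rw [hproj, smul_sub]
        rw [this, norm_smul, Real.norm_eq_abs, abs_of_pos (Real.exp_pos _)]
        have := ContinuousMap.dist_apply_le_dist (f := u) (g := v) p
        rw [dist_eq_norm] at this
        exact mul_le_mul_of_nonneg_left this (Real.exp_pos _).le
      -- integrability
      have hcont1 : Continuous fun s : ℝ =>
          ‖a (Set.projIcc 0 T hT.le s) - b (Set.projIcc 0 T hT.le s)‖ :=
        ((a.continuous.comp continuous_projIcc).sub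
          (b.continuous.comp continuous_projIcc)).norm
      have hcont2 : Continuous fun s : ℝ => Real.exp (μ * s) * dist u v := by fun_prop
      have hIle : (∫ s in (0:ℝ)..(t:ℝ),
          ‖a (Set.projIcc 0 T hT.le s) - b (Set.projIcc 0 T hT.le s)‖) ≤
          ∫ s in (0:ℝ)..(t:ℝ), Real.exp (μ * s) * dist u v :=
        intervalIntegral.integral_mono_on ht0 (hcont1.intervalIntegrable _ _)
          (hcont2.intervalIntegrable _ _) hint
      have hIcalc : (∫ s in (0:ℝ)..(t:ℝ), Real.exp (μ * s) * dist u v) =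
          μ⁻¹ * (Ep - 1) * dist u v := by
        rw [intervalIntegral.integral_mul_const]
        have := intervalIntegral.integral_comp_mul_left (a := (0:ℝ)) (b := (t:ℝ))
          (fun x => Real.exp x) hμ.ne'
        rw [this]
        rw [integral_exp]
        simp only [hEp, smul_eq_mul, mul_zero, Real.exp_zero]
      have hbound := h a b t
      have habt : ‖a t - b t‖ ≤ Ep * dist u v := by
        have : a t - b t = Ep • (u t - v t) := by
          show Real.exp (μ * (t:ℝ)) • u t - Real.exp (μ * (t:ℝ)) • v t = _
          rw [smul_sub]
        rw [this, norm_smul, Real.norm_eq_abs, abs_of_pos (Real.exp_pos _)]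
        have := ContinuousMap.dist_apply_le_dist (f := u) (g := v) t
        rw [dist_eq_norm] at this
        exact mul_le_mul_of_nonneg_left this (Real.exp_pos _).le
      have hDnn : 0 ≤ dist u v := dist_nonneg
      calc dist (Φ u t) (Φ v t) = Em * ‖Λ a t - Λ b t‖ := hdist
        _ ≤ Em * (l * ‖a t - b t‖ + L * ∫ s in (0:ℝ)..(t:ℝ),
              ‖a (Set.projIcc 0 T hT.le s) - b (Set.projIcc 0 T hT.le s)‖) :=
            mul_le_mul_of_nonneg_left hbound hEmpos.le
        _ ≤ Em * (l * (Ep * dist u v) + L * (μ⁻¹ * (Ep - 1) * dist u v)) := by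
            apply mul_le_mul_of_nonneg_left _ hEmpos.le
            gcongr
            exact hIle.trans (le_of_eq hIcalc)
        _ ≤ (1 + l) / 2 * dist u v := by
            have hLμ' : L * μ⁻¹ ≤ (1 - l) / 2 := by
              rwa [div_eq_mul_inv L μ] at hLμ
            have hμinv : 0 ≤ μ⁻¹ := (inv_pos.mpr hμ).le
            nlinarith [mul_nonneg (mul_nonneg hL hμinv) hDnn,
              mul_nonneg hl0 hDnn,
              mul_nonneg (mul_nonneg (mul_nonneg hL hμinv) hDnn) (sub_nonneg.mpr hEm1)]
  -- extract the fixed point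
  have : Nonempty C(Set.Icc (0:ℝ) T, X) := ⟨0⟩
  set p := ContractingWith.fixedPoint Φ hK with hp
  have hfix : Φ p = p := hK.fixedPoint_isFixedPt
  refine ⟨W' p, ?_, ?_⟩
  · show Λ (W' p) = W' p
    have h2 : W' (W (Λ (W' p))) = W' p := congrArg W' hfix
    rwa [hW'W] at h2
  · intro b hb
    have hbfix : Φ (W b) = W b := by
      show W (Λ (W' (W b))) = W b
      rw [hW'W, hb]
    have hWb : W b = p := hK.fixedPoint_unique hbfix
    calc b = W' (W b) := (hW'W b).symm
      _ = W' p := by rw [hWb]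
end

section
/- Let T > 0, I = [0,T], V a separable real Hilbert space, X and Z real Banach spaces, Y₁ a real Hilbert space, K_V ⊆ V nonempty closed convex, K_Y ⊆ Y₁ nonempty convex. Assume hypotheses H(A), H(j), H(R), H(S) hold, that f : I → V is continuous, and that m > β. Then for any given continuous function w : I → ℝ and any continuous ξ : I → Y₁ with ξ(t) ∈ K_Y for all t ∈ I, there exists a unique η ∈ C(I; V) with η(t) ∈ K_V for all t ∈ I such that for every t ∈ I and every v ∈ K_V: ⟨A(R(η, ξ)(t), η(t)), v − η(t)⟩_V + j(Sη(t), η(t), w(t), v) − j(Sη(t), η(t), w(t), η(t)) ≥ ⟨f(t), v − η(t)⟩_V. -/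
set_option maxHeartbeats 1000000

open Set Filter Topology

open scoped ContinuousMap

/-- Affine minorant of a convex lsc function on a closed convex set. -/
lemma exists_affine_minorant {V : Type*} [NormedAddCommGroup V] [NormedSpace ℝ V]
    {K : Set V} (hKcv : Convex ℝ K) (hKcl : IsClosed K)
    {φ : V → ℝ} (hφc : ConvexOn ℝ K φ) (hφl : LowerSemicontinuousOn φ K)
    {x₀ : V} (hx₀ : x₀ ∈ K) :
    ∃ c M : ℝ, 0 ≤ M ∧ ∀ v ∈ K, c - M * ‖v‖ ≤ φ v := by
  classical
  set E : Set (V × ℝ) := {p | p.1 ∈ K ∧ φ p.1 ≤ p.2} with hE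
  have hEcv : Convex ℝ E := by
    intro p hp q hq a b ha hb hab
    refine ⟨hKcv hp.1 hq.1 ha hb hab, ?_⟩
    calc φ (a • p.1 + b • q.1) ≤ a * φ p.1 + b * φ q.1 := hφc.2 hp.1 hq.1 ha hb hab
      _ ≤ a * p.2 + b * q.2 := by
          gcongr
          exacts [hp.2, hq.2]
  have hEcl : IsClosed E := by
    refine IsSeqClosed.isClosed ?_
    intro p q hp hq
    have hq1 : Tendsto (fun n => (p n).1) atTop (𝓝 q.1) := (continuous_fst.tendsto q).comp hq
    have hq2 : Tendsto (fun n => (p n).2) atTop (𝓝 q.2) := (continuous_snd.tendsto q).comp hq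
    have hmem : ∀ n, (p n).1 ∈ K := fun n => (hp n).1
    have hq1K : q.1 ∈ K := hKcl.mem_of_tendsto hq1 (Eventually.of_forall hmem)
    refine ⟨hq1K, ?_⟩
    by_contra hlt
    push_neg at hlt
    set y := (q.2 + φ q.1) / 2 with hy
    have hy1 : q.2 < y := by rw [hy]; linarith
    have hy2 : y < φ q.1 := by rw [hy]; linarith
    have hnw : Tendsto (fun n => (p n).1) atTop (𝓝[K] q.1) :=
      tendsto_nhdsWithin_iff.2 ⟨hq1, Eventually.of_forall hmem⟩
    have h1 : ∀ᶠ n in atTop, y < φ (p n).1 := hnw.eventually (hφl q.1 hq1K y hy2)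
    have h2 : ∀ᶠ n in atTop, (p n).2 < y := hq2.eventually (eventually_lt_nhds hy1)
    rcases (h1.and h2).exists with ⟨n, hn1, hn2⟩
    exact absurd ((hp n).2.trans hn2.le) (not_le.2 hn1)
  have hpt : (x₀, φ x₀ - 1) ∉ E := by
    intro h
    have := h.2
    simp only at this
    linarith
  obtain ⟨l, u, hlu, hl⟩ := geometric_hahn_banach_point_closed hEcv hEcl hpt
  -- decompose l
  set lam : ℝ := l (0, 1) with hlam
  have hsplit : ∀ v : V, ∀ r : ℝ, l (v, r) = l (v, 0) + r * lam := by
    intro v r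
    have : (v, r) = (v, (0:ℝ)) + r • ((0:V), (1:ℝ)) := by
      simp [Prod.ext_iff]
    rw [this, map_add, map_smul]
    simp [hlam]
  have hlampos : 0 < lam := by
    have h1 : u < l (x₀, φ x₀) := hl _ ⟨hx₀, le_refl _⟩
    rw [hsplit] at hlu h1
    nlinarith
  set Lv : V →L[ℝ] ℝ := l.comp (ContinuousLinearMap.inl ℝ V ℝ) with hLv
  refine ⟨u / lam, ‖Lv‖ / lam, by positivity, ?_⟩
  intro v hv
  have h1 : u < l (v, 0) + φ v * lam := by
    have := hl (v, φ v) ⟨hv, le_refl _⟩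
    rwa [hsplit] at this
  have h2 : |l (v, 0)| ≤ ‖Lv‖ * ‖v‖ := by
    have hvv : l (v, (0:ℝ)) = Lv v := by simp [hLv]
    rw [hvv, ← Real.norm_eq_abs]
    exact Lv.le_opNorm v
  have habs := abs_le.1 h2
  have hφv : (u - l (v,0)) / lam ≤ φ v := by
    rw [div_le_iff₀ hlampos]
    linarith
  refine le_trans ?_ hφv
  have heq : u / lam - ‖Lv‖ / lam * ‖v‖ = (u - ‖Lv‖ * ‖v‖) / lam := by ring
  rw [heq]
  gcongr
  exact habs.2

lemma exists_prox {V : Type*} [NormedAddCommGroup V] [InnerProductSpace ℝ V] [CompleteSpace V]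
    {K : Set V} (hKne : K.Nonempty) (hKcl : IsClosed K) (hKcv : Convex ℝ K)
    {φ : V → ℝ} (hφc : ConvexOn ℝ K φ) (hφl : LowerSemicontinuousOn φ K)
    (g : V) :
    ∃ u ∈ K, ∀ v ∈ K, 0 ≤ (inner ℝ (u - g) (v - u) : ℝ) + φ v - φ u := by
  classical
  obtain ⟨x₀, hx₀⟩ := hKne
  obtain ⟨c, M, hM, hcM⟩ := exists_affine_minorant hKcv hKcl hφc hφl hx₀
  set F : V → ℝ := fun v => φ v + ‖v - g‖ ^ 2 / 2 with hF
  -- lower bound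
  have hlb : ∀ v ∈ K, c - (M + ‖g‖) ^ 2 / 2 - ‖g‖ ^ 2 ≤ F v := by
    intro v hv
    have h1 := hcM v hv
    have h2 : |‖v‖ - ‖g‖| ≤ ‖v - g‖ := abs_norm_sub_norm_le v g
    have h3 : (‖v‖ - ‖g‖) ^ 2 ≤ ‖v - g‖ ^ 2 := by
      rw [← sq_abs (‖v‖ - ‖g‖)]
      exact pow_le_pow_left₀ (abs_nonneg _) h2 2
    have h4 : (0:ℝ) ≤ ‖v‖ := norm_nonneg _
    show c - (M + ‖g‖) ^ 2 / 2 - ‖g‖ ^ 2 ≤ φ v + ‖v - g‖ ^ 2 / 2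
    nlinarith [sq_nonneg (‖v‖ - ‖g‖ - M)]
  set B : ℝ := c - (M + ‖g‖) ^ 2 / 2 - ‖g‖ ^ 2 with hB
  have hne : (F '' K).Nonempty := ⟨F x₀, mem_image_of_mem F hx₀⟩
  have hbdd : BddBelow (F '' K) := ⟨B, by rintro y ⟨v, hv, rfl⟩; exact hlb v hv⟩
  set d : ℝ := sInf (F '' K) with hd
  have hdle : ∀ v ∈ K, d ≤ F v := fun v hv => csInf_le hbdd (mem_image_of_mem F hv)
  -- strong convexity estimate
  have hkey : ∀ x ∈ K, ∀ y ∈ K, ‖x - y‖ ^ 2 / 8 ≤ F x / 2 + F y / 2 - d := by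
    intro x hx y hy
    have hmid : (1/2 : ℝ) • x + (1/2 : ℝ) • y ∈ K :=
      hKcv hx hy (by norm_num) (by norm_num) (by norm_num)
    have hpar := parallelogram_law_with_norm ℝ (x - g) (y - g)
    have hmide : ((1/2 : ℝ) • x + (1/2 : ℝ) • y) - g = (1/2 : ℝ) • ((x - g) + (y - g)) := by
      module
    have hsub : ‖x - y‖ = ‖(x - g) - (y - g)‖ := by rw [show x - y = (x - g) - (y - g) by abel]
    have hφmid : φ ((1/2 : ℝ) • x + (1/2 : ℝ) • y) ≤ (1/2) * φ x + (1/2) * φ y :=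
      hφc.2 hx hy (by norm_num) (by norm_num) (by norm_num)
    have hdm := hdle _ hmid
    have hnorm1 : ‖((1/2 : ℝ) • x + (1/2 : ℝ) • y) - g‖ ^ 2 = ‖(x - g) + (y - g)‖ ^ 2 / 4 := by
      rw [hmide, norm_smul]
      simp only [norm_div, Real.norm_eq_abs]
      rw [mul_pow]
      norm_num
      ring
    have hFx : F x = φ x + ‖x - g‖ ^ 2 / 2 := rfl
    have hFy : F y = φ y + ‖y - g‖ ^ 2 / 2 := rfl
    have hFm : F ((1/2 : ℝ) • x + (1/2 : ℝ) • y)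
        = φ ((1/2 : ℝ) • x + (1/2 : ℝ) • y) + ‖((1/2 : ℝ) • x + (1/2 : ℝ) • y) - g‖ ^ 2 / 2 := rfl
    rw [hFm, hnorm1] at hdm
    rw [hFx, hFy, hsub]
    nlinarith [hpar, hφmid, hdm]
  -- minimizing sequence
  have hseq : ∀ n : ℕ, ∃ v ∈ K, F v < d + 1 / (n + 1) := by
    intro n
    have hpos : (0:ℝ) < 1 / (n + 1) := by positivity
    obtain ⟨y, hy, hy2⟩ := Real.lt_sInf_add_pos hne hpos
    obtain ⟨v, hv, rfl⟩ := hy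
    exact ⟨v, hv, hy2⟩
  choose uu huK huF using hseq
  have hcau : CauchySeq uu := by
    refine cauchySeq_of_le_tendsto_0 (fun N : ℕ => Real.sqrt (8 / (N + 1))) ?_ ?_
    · intro n m N hn hm
      have h1 : ‖uu n - uu m‖ ^ 2 / 8 ≤ F (uu n) / 2 + F (uu m) / 2 - d :=
        hkey _ (huK n) _ (huK m)
      have h2 := huF n
      have h3 := huF m
      have hn' : 1 / ((n:ℝ) + 1) ≤ 1 / ((N:ℝ) + 1) := by
        apply one_div_le_one_div_of_le (by positivity)
        exact_mod_cast Nat.succ_le_succ hn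
      have hm' : 1 / ((m:ℝ) + 1) ≤ 1 / ((N:ℝ) + 1) := by
        apply one_div_le_one_div_of_le (by positivity)
        exact_mod_cast Nat.succ_le_succ hm
      have h4 : ‖uu n - uu m‖ ^ 2 ≤ 8 / (N + 1) := by
        have he : (8:ℝ) / ((N:ℝ) + 1) = 8 * (1 / ((N:ℝ)+1)) := by ring
        rw [he]
        linarith
      rw [dist_eq_norm]
      exact (Real.le_sqrt (norm_nonneg _) (by positivity)).2 h4
    · have h8 : Tendsto (fun N : ℕ => 8 / ((N:ℝ) + 1)) atTop (𝓝 0) := by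
        have := tendsto_one_div_add_atTop_nhds_zero_nat.const_mul (8:ℝ)
        rw [mul_zero] at this
        exact this.congr fun n => by ring
      have h9 := (Real.continuous_sqrt.tendsto' 0 0 (by simp)).comp h8
      exact h9

  obtain ⟨u, hu⟩ := cauchySeq_tendsto_of_complete hcau
  have huKlim : u ∈ K := hKcl.mem_of_tendsto hu (Eventually.of_forall huK)
  -- F u ≤ d
  have hFud : F u ≤ d := by
    clear_value F B d
    by_contra hlt
    push_neg at hlt
    obtain ⟨y, hy1, hy2⟩ : ∃ y, d < y ∧ y < F u := ⟨(d + F u) / 2, by linarith, by linarith⟩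
    have hcont : Continuous (fun v : V => ‖v - g‖ ^ 2 / 2) := by fun_prop
    have hFl : LowerSemicontinuousOn F K := by
      rw [hF]
      exact hφl.add (hcont.lowerSemicontinuous.lowerSemicontinuousOn K)
    have hnw : Tendsto uu atTop (𝓝[K] u) :=
      tendsto_nhdsWithin_iff.2 ⟨hu, Eventually.of_forall huK⟩
    have h1 : ∀ᶠ n in atTop, y < F (uu n) := hnw.eventually (hFl u huKlim y hy2)
    have h2 : ∀ᶠ n in atTop, F (uu n) < y := by
      have : Tendsto (fun n : ℕ => d + 1 / ((n:ℝ) + 1)) atTop (𝓝 d) := by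
        have : Tendsto (fun n : ℕ => 1 / ((n:ℝ) + 1)) atTop (𝓝 0) :=
          tendsto_one_div_add_atTop_nhds_zero_nat
        simpa using tendsto_const_nhds.add this
      filter_upwards [this.eventually (eventually_lt_nhds hy1)] with n hnn
      exact (huF n).trans hnn
    rcases (h1.and h2).exists with ⟨n, hn1, hn2⟩
    exact absurd (hn1.trans hn2) (lt_irrefl y)
  refine ⟨u, huKlim, ?_⟩
  intro v hv
  have hstep : ∀ t : ℝ, 0 < t → t ≤ 1 →
      0 ≤ t * ((inner ℝ (u - g) (v - u) : ℝ) + φ v - φ u) + t^2 * ‖v - u‖^2 / 2 := by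
    intro t ht0 ht1
    have hw : (1 - t) • u + t • v ∈ K := hKcv huKlim hv (by linarith) ht0.le (by ring)
    have hφw : φ ((1 - t) • u + t • v) ≤ (1 - t) * φ u + t * φ v :=
      hφc.2 huKlim hv (by linarith) ht0.le (by ring)
    have hFu : F u ≤ F ((1 - t) • u + t • v) := le_trans hFud (hdle _ hw)
    have hexp : ((1 - t) • u + t • v) - g = (u - g) + t • (v - u) := by module
    have hns : ‖((1 - t) • u + t • v) - g‖ ^ 2
        = ‖u - g‖^2 + 2 * (t * (inner ℝ (u - g) (v - u) : ℝ)) + t^2 * ‖v - u‖^2 := by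
      rw [hexp, norm_add_sq_real, real_inner_smul_right, norm_smul]
      simp only [Real.norm_eq_abs]
      rw [mul_pow, sq_abs]
    have hFw : F ((1 - t) • u + t • v) = φ ((1 - t) • u + t • v)
        + ‖((1 - t) • u + t • v) - g‖ ^ 2 / 2 := rfl
    have hFu' : F u = φ u + ‖u - g‖ ^ 2 / 2 := rfl
    rw [hFw, hns, hFu'] at hFu
    nlinarith
  by_contra hneg
  push_neg at hneg
  set cneg : ℝ := -((inner ℝ (u - g) (v - u) : ℝ) + φ v - φ u) with hcneg
  have hcpos : 0 < cneg := by rw [hcneg]; linarith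
  set t₀ : ℝ := min 1 (cneg / (‖v - u‖^2 + 1)) with ht₀
  have ht₀0 : 0 < t₀ := lt_min one_pos (by positivity)
  have ht₀1 : t₀ ≤ 1 := min_le_left _ _
  have h := hstep t₀ ht₀0 ht₀1
  have hQ : t₀ * ‖v - u‖ ^ 2 < cneg := by
    calc t₀ * ‖v - u‖ ^ 2 ≤ (cneg / (‖v - u‖^2 + 1)) * ‖v - u‖ ^ 2 := by
          apply mul_le_mul_of_nonneg_right (min_le_right _ _) (by positivity)
      _ < cneg := by
          rw [div_mul_eq_mul_div, div_lt_iff₀ (by positivity)]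
          nlinarith [sq_nonneg (‖v - u‖)]
  have h5 : t₀ ^ 2 * ‖v - u‖ ^ 2 = t₀ * (t₀ * ‖v - u‖ ^ 2) := by ring
  have h6 : t₀ * (t₀ * ‖v - u‖ ^ 2) < t₀ * cneg := mul_lt_mul_of_pos_left hQ ht₀0
  have h7 : t₀ * ((inner ℝ (u - g) (v - u) : ℝ) + φ v - φ u) = -(t₀ * cneg) := by
    rw [hcneg]; ring
  rw [h7, h5] at h
  linarith [mul_pos ht₀0 hcpos]

lemma elliptic_vi {V : Type*} [NormedAddCommGroup V] [InnerProductSpace ℝ V] [CompleteSpace V]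
    {K : Set V} (hKne : K.Nonempty) (hKcl : IsClosed K) (hKcv : Convex ℝ K)
    (A' : V → V) (L m : ℝ) (hL : 0 < L) (hm : 0 < m)
    (hlip : ∀ b₁ ∈ K, ∀ b₂ ∈ K, ‖A' b₁ - A' b₂‖ ≤ L * ‖b₁ - b₂‖)
    (hmono : ∀ b₁ ∈ K, ∀ b₂ ∈ K, m * ‖b₁ - b₂‖ ^ 2 ≤ (inner ℝ (A' b₁ - A' b₂) (b₁ - b₂) : ℝ))
    {φ : V → ℝ} (hφc : ConvexOn ℝ K φ) (hφl : LowerSemicontinuousOn φ K) (f₀ : V) :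
    ∃ u ∈ K, ∀ v ∈ K,
      (inner ℝ f₀ (v - u) : ℝ) ≤ (inner ℝ (A' u) (v - u) : ℝ) + φ v - φ u := by
  classical
  set ρ : ℝ := m / L ^ 2 with hρ
  have hρ0 : 0 < ρ := by positivity
  have hφc' : ConvexOn ℝ K (fun v => ρ * φ v) := hφc.smul hρ0.le
  have hφl' : LowerSemicontinuousOn (fun v => ρ * φ v) K := by
    intro x hx y hy
    have hy' : y / ρ < φ x := by rw [div_lt_iff₀' hρ0]; exact hy
    filter_upwards [hφl x hx (y / ρ) hy'] with z hz
    calc y = ρ * (y / ρ) := by field_simp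
      _ < ρ * φ z := by exact mul_lt_mul_of_pos_left hz hρ0
  have hex : ∀ g : V, ∃ u ∈ K, ∀ v ∈ K,
      0 ≤ (inner ℝ (u - (g - ρ • (A' g - f₀))) (v - u) : ℝ) + ρ * φ v - ρ * φ u :=
    fun g => exists_prox hKne hKcl hKcv hφc' hφl' (g - ρ • (A' g - f₀))
  choose P hPK hPvi using hex
  -- contraction estimate
  have hcontr : ∀ g₁ ∈ K, ∀ g₂ ∈ K,
      ‖P g₁ - P g₂‖ ≤ Real.sqrt (max 0 (1 - m ^ 2 / L ^ 2)) * ‖g₁ - g₂‖ := by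
    intro g₁ hg₁ g₂ hg₂
    set u₁ := P g₁
    set u₂ := P g₂
    have h1 := hPvi g₁ u₂ (hPK g₂)
    have h2 := hPvi g₂ u₁ (hPK g₁)
    set w : V := (g₁ - g₂) - ρ • (A' g₁ - A' g₂) with hw
    have hsum : ‖u₁ - u₂‖ ^ 2 ≤ (inner ℝ w (u₁ - u₂) : ℝ) := by
      have e1 : (inner ℝ (u₁ - (g₁ - ρ • (A' g₁ - f₀))) (u₂ - u₁) : ℝ)
          + (inner ℝ (u₂ - (g₂ - ρ • (A' g₂ - f₀))) (u₁ - u₂) : ℝ)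
          = (inner ℝ w (u₁ - u₂) : ℝ) - (inner ℝ (u₁ - u₂) (u₁ - u₂) : ℝ) := by
        have : (inner ℝ (u₁ - (g₁ - ρ • (A' g₁ - f₀))) (u₂ - u₁) : ℝ)
            = -(inner ℝ (u₁ - (g₁ - ρ • (A' g₁ - f₀))) (u₁ - u₂) : ℝ) := by
          rw [← inner_neg_right]; congr 1; abel
        rw [this, ← sub_eq_neg_add, ← inner_sub_left]
        rw [show u₂ - (g₂ - ρ • (A' g₂ - f₀)) - (u₁ - (g₁ - ρ • (A' g₁ - f₀)))
            = w - (u₁ - u₂) by rw [hw]; module]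
        rw [inner_sub_left]
      have hadd : 0 ≤ (inner ℝ w (u₁ - u₂) : ℝ) - (inner ℝ (u₁ - u₂) (u₁ - u₂) : ℝ) := by
        rw [← e1]; linarith
      rw [real_inner_self_eq_norm_sq] at hadd
      linarith
    have hwnorm : ‖w‖ ^ 2 ≤ max 0 (1 - m ^ 2 / L ^ 2) * ‖g₁ - g₂‖ ^ 2 := by
      have hexp : ‖w‖ ^ 2 = ‖g₁ - g₂‖ ^ 2
          - 2 * ρ * (inner ℝ (A' g₁ - A' g₂) (g₁ - g₂) : ℝ) + ρ ^ 2 * ‖A' g₁ - A' g₂‖ ^ 2 := by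
        rw [hw, norm_sub_sq_real, real_inner_smul_right, norm_smul]
        simp only [Real.norm_eq_abs, abs_of_pos hρ0]
        rw [real_inner_comm]
        ring
      have hmo := hmono g₁ hg₁ g₂ hg₂
      have hli := hlip g₁ hg₁ g₂ hg₂
      have hli2 : ‖A' g₁ - A' g₂‖ ^ 2 ≤ L ^ 2 * ‖g₁ - g₂‖ ^ 2 := by
        rw [show L ^ 2 * ‖g₁ - g₂‖ ^ 2 = (L * ‖g₁ - g₂‖) ^ 2 by ring]
        exact pow_le_pow_left₀ (norm_nonneg _) hli 2
      have hc2 : ‖w‖ ^ 2 ≤ (1 - m ^ 2 / L ^ 2) * ‖g₁ - g₂‖ ^ 2 := by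
        rw [hexp]
        have h3 : ρ ^ 2 * ‖A' g₁ - A' g₂‖ ^ 2 ≤ ρ ^ 2 * (L ^ 2 * ‖g₁ - g₂‖ ^ 2) := by
          apply mul_le_mul_of_nonneg_left hli2 (by positivity)
        have h4 : 2 * ρ * (m * ‖g₁ - g₂‖ ^ 2) ≤ 2 * ρ * (inner ℝ (A' g₁ - A' g₂) (g₁ - g₂) : ℝ) := by
          apply mul_le_mul_of_nonneg_left hmo (by positivity)
        have h3' : ρ ^ 2 * (L ^ 2 * ‖g₁ - g₂‖ ^ 2) = m ^ 2 / L ^ 2 * ‖g₁ - g₂‖ ^ 2 := by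
          rw [hρ]; field_simp
        have h4' : 2 * ρ * (m * ‖g₁ - g₂‖ ^ 2) = 2 * (m ^ 2 / L ^ 2) * ‖g₁ - g₂‖ ^ 2 := by
          rw [hρ]; field_simp
        linarith
      exact hc2.trans (by
        apply mul_le_mul_of_nonneg_right (le_max_right _ _) (by positivity))
    have hwle : ‖w‖ ≤ Real.sqrt (max 0 (1 - m ^ 2 / L ^ 2)) * ‖g₁ - g₂‖ := by
      have h5 : ‖w‖ ^ 2 ≤ (Real.sqrt (max 0 (1 - m ^ 2 / L ^ 2)) * ‖g₁ - g₂‖) ^ 2 := by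
        rw [mul_pow, Real.sq_sqrt (le_max_left _ _)]
        exact hwnorm
      have := Real.sqrt_le_sqrt h5
      rwa [Real.sqrt_sq (norm_nonneg _), Real.sqrt_sq (by positivity)] at this
    have hcs : (inner ℝ w (u₁ - u₂) : ℝ) ≤ ‖w‖ * ‖u₁ - u₂‖ := real_inner_le_norm _ _
    by_contra hcon
    push_neg at hcon
    have he0 : 0 < ‖u₁ - u₂‖ := lt_of_le_of_lt (by positivity) hcon
    nlinarith
  -- Banach fixed point on the subtype
  have : Nonempty K := hKne.to_subtype
  have : CompleteSpace K := hKcl.completeSpace_coe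
  set k : NNReal := ⟨Real.sqrt (max 0 (1 - m ^ 2 / L ^ 2)), Real.sqrt_nonneg _⟩ with hk
  have hk1 : k < 1 := by
    rw [← NNReal.coe_lt_coe]
    show Real.sqrt (max 0 (1 - m ^ 2 / L ^ 2)) < 1
    rw [show Real.sqrt (max 0 (1 - m ^ 2 / L ^ 2)) < 1 ↔
      max 0 (1 - m ^ 2 / L ^ 2) < 1 ^ 2 from Real.sqrt_lt' one_pos, one_pow, max_lt_iff]
    constructor
    · norm_num
    · have : 0 < m ^ 2 / L ^ 2 := by positivity
      linarith
  set Φ : K → K := fun g => ⟨P g.1, hPK g.1⟩ with hΦ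
  have hΦlip : ContractingWith k Φ := by
    constructor
    · exact hk1
    · apply LipschitzWith.of_dist_le_mul
      intro g₁ g₂
      simp only [Subtype.dist_eq, dist_eq_norm]
      exact hcontr g₁.1 g₁.2 g₂.1 g₂.2
  set u : K := hΦlip.fixedPoint Φ with hudef
  have hfix : Φ u = u := hΦlip.fixedPoint_isFixedPt
  have hPu : P (u : V) = (u : V) := congrArg Subtype.val hfix
  refine ⟨(u : V), u.2, ?_⟩
  intro v hv
  have h := hPvi (u : V) v hv
  rw [hPu] at h
  have hsimp : ((u : V) - ((u : V) - ρ • (A' (u : V) - f₀))) = ρ • (A' (u : V) - f₀) := by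
    abel
  rw [hsimp, real_inner_smul_left, inner_sub_left] at h
  have hring : ρ * ((inner ℝ (A' (u : V)) (v - (u : V)) : ℝ)
        - (inner ℝ f₀ (v - (u : V)) : ℝ) + φ v - φ (u : V))
      = ρ * ((inner ℝ (A' (u : V)) (v - (u : V)) : ℝ) - (inner ℝ f₀ (v - (u : V)) : ℝ))
        + ρ * φ v - ρ * φ (u : V) := by ring
  have h4 : 0 ≤ ρ * ((inner ℝ (A' (u : V)) (v - (u : V)) : ℝ)
      - (inner ℝ f₀ (v - (u : V)) : ℝ) + φ v - φ (u : V)) := by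
    rw [hring]; exact h
  have h5 := (mul_nonneg_iff_of_pos_left hρ0).1 h4
  linarith

lemma elliptic_qvi {V : Type*} [NormedAddCommGroup V] [InnerProductSpace ℝ V] [CompleteSpace V]
    {K : Set V} (hKne : K.Nonempty) (hKcl : IsClosed K) (hKcv : Convex ℝ K)
    (A' : V → V) (L m : ℝ) (hL : 0 < L) (hm : 0 < m)
    (hlip : ∀ b₁ ∈ K, ∀ b₂ ∈ K, ‖A' b₁ - A' b₂‖ ≤ L * ‖b₁ - b₂‖)
    (hmono : ∀ b₁ ∈ K, ∀ b₂ ∈ K, m * ‖b₁ - b₂‖ ^ 2 ≤ (inner ℝ (A' b₁ - A' b₂) (b₁ - b₂) : ℝ))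
    (ψ : V → V → ℝ) (b' : ℝ) (hb' : 0 ≤ b') (hb'm : b' < m)
    (hψc : ∀ b, ConvexOn ℝ K (ψ b)) (hψl : ∀ b, LowerSemicontinuousOn (ψ b) K)
    (hψest : ∀ b₁ b₂ : V, ∀ d₁ ∈ K, ∀ d₂ ∈ K,
      ψ b₁ d₂ - ψ b₁ d₁ + ψ b₂ d₁ - ψ b₂ d₂ ≤ b' * ‖b₁ - b₂‖ * ‖d₁ - d₂‖)
    (f₀ : V) :
    ∃! u : V, u ∈ K ∧ ∀ v ∈ K,
      (inner ℝ f₀ (v - u) : ℝ) ≤ (inner ℝ (A' u) (v - u) : ℝ) + ψ u v - ψ u u := by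
  classical
  have hex : ∀ b : V, ∃ u ∈ K, ∀ v ∈ K,
      (inner ℝ f₀ (v - u) : ℝ) ≤ (inner ℝ (A' u) (v - u) : ℝ) + ψ b v - ψ b u :=
    fun b => elliptic_vi hKne hKcl hKcv A' L m hL hm hlip hmono (hψc b) (hψl b) f₀
  choose Q hQK hQvi using hex
  -- key comparison estimate
  have hcomp : ∀ b₁ b₂ u₁ u₂ : V, u₁ ∈ K → u₂ ∈ K →
      (∀ v ∈ K, (inner ℝ f₀ (v - u₁) : ℝ) ≤ (inner ℝ (A' u₁) (v - u₁) : ℝ) + ψ b₁ v - ψ b₁ u₁) →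
      (∀ v ∈ K, (inner ℝ f₀ (v - u₂) : ℝ) ≤ (inner ℝ (A' u₂) (v - u₂) : ℝ) + ψ b₂ v - ψ b₂ u₂) →
      m * ‖u₁ - u₂‖ ^ 2 ≤ b' * ‖b₁ - b₂‖ * ‖u₁ - u₂‖ := by
    intro b₁ b₂ u₁ u₂ hu₁ hu₂ hv₁ hv₂
    have h1 := hv₁ u₂ hu₂
    have h2 := hv₂ u₁ hu₁
    have hmo := hmono u₁ hu₁ u₂ hu₂
    have hest := hψest b₁ b₂ u₁ hu₁ u₂ hu₂
    have hin : (inner ℝ (A' u₁ - A' u₂) (u₁ - u₂) : ℝ)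
        = - ((inner ℝ (A' u₁) (u₂ - u₁) : ℝ) + (inner ℝ (A' u₂) (u₁ - u₂) : ℝ)) := by
      rw [inner_sub_left]
      have e1 : (inner ℝ (A' u₁) (u₂ - u₁) : ℝ) = - (inner ℝ (A' u₁) (u₁ - u₂) : ℝ) := by
        rw [← inner_neg_right]; congr 1; abel
      rw [e1]; ring
    have hf : (inner ℝ f₀ (u₂ - u₁) : ℝ) = - (inner ℝ f₀ (u₁ - u₂) : ℝ) := by
      rw [← inner_neg_right]; congr 1; abel
    rw [hin] at hmo
    rw [hf] at h1
    linarith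
  have hcontr : ∀ b₁ b₂ : V, ‖Q b₁ - Q b₂‖ ≤ (b' / m) * ‖b₁ - b₂‖ := by
    intro b₁ b₂
    have h := hcomp b₁ b₂ (Q b₁) (Q b₂) (hQK b₁) (hQK b₂) (hQvi b₁) (hQvi b₂)
    by_contra hc
    push_neg at hc
    have h0 : 0 ≤ (b' / m) * ‖b₁ - b₂‖ := by positivity
    have he : 0 < ‖Q b₁ - Q b₂‖ := lt_of_le_of_lt h0 hc
    have hlt : b' * ‖b₁ - b₂‖ < m * ‖Q b₁ - Q b₂‖ := by
      have h6 := mul_lt_mul_of_pos_left hc hm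
      have hid : m * (b' / m * ‖b₁ - b₂‖) = b' * ‖b₁ - b₂‖ := by field_simp
      rwa [hid] at h6
    nlinarith [mul_lt_mul_of_pos_right hlt he]
  have hVne : Nonempty V := ⟨0⟩
  set k : NNReal := ⟨b' / m, by positivity⟩ with hk
  have hk1 : k < 1 := by
    rw [← NNReal.coe_lt_coe]
    show b' / m < 1
    rw [div_lt_one hm]
    exact hb'm
  have hQcon : ContractingWith k Q := by
    refine ⟨hk1, LipschitzWith.of_dist_le_mul ?_⟩
    intro b₁ b₂
    rw [dist_eq_norm, dist_eq_norm]
    exact hcontr b₁ b₂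
  set u : V := hQcon.fixedPoint Q with hudef
  have hfix : Q u = u := hQcon.fixedPoint_isFixedPt
  have huK : u ∈ K := by rw [← hfix]; exact hQK u
  have huvi0 : ∀ v ∈ K, (inner ℝ f₀ (v - u) : ℝ) ≤ (inner ℝ (A' u) (v - u) : ℝ) + ψ u v - ψ u u := by
    intro v hv
    have := hQvi u v hv
    rwa [hfix] at this
  refine ⟨u, ⟨huK, huvi0⟩, ?_⟩
  intro u' hu'
  obtain ⟨hu'K, hu'vi⟩ := hu' 
  have huvi : ∀ v ∈ K, (inner ℝ f₀ (v - u) : ℝ) ≤ (inner ℝ (A' u) (v - u) : ℝ) + ψ u v - ψ u u := by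
    intro v hv
    have := hQvi u v hv
    rwa [hfix] at this
  have h := hcomp u' u u' u hu'K huK hu'vi huvi
  by_contra hne
  have hpos : 0 < ‖u' - u‖ := by
    rw [norm_pos_iff, sub_ne_zero]
    exact hne
  have hsq : ‖u' - u‖ ^ 2 = ‖u' - u‖ * ‖u' - u‖ := sq ‖u' - u‖
  nlinarith [mul_pos hpos hpos, mul_lt_mul_of_pos_right hb'm (mul_pos hpos hpos)]

/-- Unique solvability of the history-dependent quasivariational inequality
(Problem 3.1 / Theorem 3.1): under H(A), H(j), H(R), H(S), continuity of `f`, and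
the smallness condition `m > β`, for every continuous `w : I → ℝ` and continuous
`ξ : I → Y₁` with values in `K_Y` there is a unique continuous `η : I → V` with
values in `K_V` solving the quasivariational inequality at every time `t`. -/
theorem stmt3
    {V : Type*} [NormedAddCommGroup V] [InnerProductSpace ℝ V] [CompleteSpace V]
    [TopologicalSpace.SeparableSpace V]
    {X : Type*} [NormedAddCommGroup X] [NormedSpace ℝ X] [CompleteSpace X]
    {Z : Type*} [NormedAddCommGroup Z] [NormedSpace ℝ Z] [CompleteSpace Z]
    {Y₁ : Type*} [NormedAddCommGroup Y₁] [InnerProductSpace ℝ Y₁] [CompleteSpace Y₁]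
    (T : ℝ) (hT : 0 < T)
    (KV : Set V) (hKVne : KV.Nonempty) (hKVcl : IsClosed KV) (hKVcv : Convex ℝ KV)
    (KY : Set Y₁) (hKYne : KY.Nonempty) (hKYcv : Convex ℝ KY)
    -- H(A)
    (A : X → V → V) (L₁ L₂ m : ℝ) (hL₁ : 0 < L₁) (hL₂ : 0 < L₂) (hm : 0 < m)
    (hA₁ : ∀ (a₁ a₂ : X), ∀ b ∈ KV, ‖A a₁ b - A a₂ b‖ ≤ L₁ * ‖a₁ - a₂‖)
    (hA₂ : ∀ (a : X), ∀ b₁ ∈ KV, ∀ b₂ ∈ KV, ‖A a b₁ - A a b₂‖ ≤ L₂ * ‖b₁ - b₂‖)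
    (hA₃ : ∀ (a : X), ∀ b₁ ∈ KV, ∀ b₂ ∈ KV,
      m * ‖b₁ - b₂‖ ^ 2 ≤ (inner ℝ (A a b₁ - A a b₂) (b₁ - b₂) : ℝ))
    -- H(j)
    (j : Z → V → ℝ → V → ℝ) (α β γ : ℝ) (hα : 0 < α) (hβ : 0 < β) (hγ : 0 < γ)
    (hjcv : ∀ (a : Z) (b : V) (c : ℝ), ConvexOn ℝ KV (j a b c))
    (hjlsc : ∀ (a : Z) (b : V) (c : ℝ), LowerSemicontinuousOn (j a b c) KV)
    (hjest : ∀ (a₁ a₂ : Z) (b₁ b₂ : V) (c₁ c₂ : ℝ), ∀ d₁ ∈ KV, ∀ d₂ ∈ KV,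
      j a₁ b₁ c₁ d₂ - j a₁ b₁ c₁ d₁ + j a₂ b₂ c₂ d₁ - j a₂ b₂ c₂ d₂ ≤
        α * ‖a₁ - a₂‖ * ‖d₁ - d₂‖ + β * ‖b₁ - b₂‖ * ‖d₁ - d₂‖ +
          γ * |c₁ - c₂| * ‖d₁ - d₂‖)
    -- H(R)
    (R : C(Set.Icc (0:ℝ) T, V) → C(Set.Icc (0:ℝ) T, Y₁) → C(Set.Icc (0:ℝ) T, X))
    (r₁ r₂ : ℝ) (hr₁ : 0 < r₁) (hr₂ : 0 < r₂)
    (hR₁ : ∀ (a₁ a₂ : C(Set.Icc (0:ℝ) T, V)) (b : C(Set.Icc (0:ℝ) T, Y₁)),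
      (∀ t, a₁ t ∈ KV) → (∀ t, a₂ t ∈ KV) → (∀ t, b t ∈ KY) →
      ∀ t : Set.Icc (0:ℝ) T, ‖R a₁ b t - R a₂ b t‖ ≤
        r₁ * ∫ σ in (0:ℝ)..(t:ℝ),
          ‖a₁ (Set.projIcc 0 T hT.le σ) - a₂ (Set.projIcc 0 T hT.le σ)‖)
    (hR₂ : ∀ (a : C(Set.Icc (0:ℝ) T, V)) (b₁ b₂ : C(Set.Icc (0:ℝ) T, Y₁)),
      (∀ t, a t ∈ KV) → (∀ t, b₁ t ∈ KY) → (∀ t, b₂ t ∈ KY) →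
      ∀ t : Set.Icc (0:ℝ) T, ‖R a b₁ t - R a b₂ t‖ ≤
        r₂ * ∫ σ in (0:ℝ)..(t:ℝ),
          ‖b₁ (Set.projIcc 0 T hT.le σ) - b₂ (Set.projIcc 0 T hT.le σ)‖)
    -- H(S)
    (S : C(Set.Icc (0:ℝ) T, V) → C(Set.Icc (0:ℝ) T, Z)) (s : ℝ) (hs : 0 < s)
    (hS : ∀ (a₁ a₂ : C(Set.Icc (0:ℝ) T, V)),
      (∀ t, a₁ t ∈ KV) → (∀ t, a₂ t ∈ KV) →
      ∀ t : Set.Icc (0:ℝ) T, ‖S a₁ t - S a₂ t‖ ≤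
        s * ∫ σ in (0:ℝ)..(t:ℝ),
          ‖a₁ (Set.projIcc 0 T hT.le σ) - a₂ (Set.projIcc 0 T hT.le σ)‖)
    -- H(f)
    (f : C(Set.Icc (0:ℝ) T, V))
    -- smallness condition
    (hmβ : β < m)
    -- data
    (w : C(Set.Icc (0:ℝ) T, ℝ))
    (ξ : C(Set.Icc (0:ℝ) T, Y₁)) (hξ : ∀ t, ξ t ∈ KY) :
    ∃! η : C(Set.Icc (0:ℝ) T, V), (∀ t, η t ∈ KV) ∧
      ∀ t : Set.Icc (0:ℝ) T, ∀ v ∈ KV,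
        (inner ℝ (A (R η ξ t) (η t)) (v - η t) : ℝ) +
            j (S η t) (η t) (w t) v - j (S η t) (η t) (w t) (η t) ≥
          (inner ℝ (f t) (v - η t) : ℝ) := by
  classical
  have hmβ' : (0:ℝ) < m - β := by linarith
  -- Step 1: unique solvability of the elliptic QVI for fixed data
  have hQVI : ∀ (x : X) (z : Z) (c : ℝ) (g : V),
      ∃! u : V, u ∈ KV ∧ ∀ v ∈ KV,
        (inner ℝ g (v - u) : ℝ) ≤ (inner ℝ (A x u) (v - u) : ℝ) + j z u c v - j z u c u := by
    intro x z c g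
    refine elliptic_qvi hKVne hKVcl hKVcv (A x) L₂ m hL₂ hm (hA₂ x) (hA₃ x)
      (fun b d => j z b c d) β hβ.le hmβ (fun b => hjcv z b c) (fun b => hjlsc z b c) ?_ g
    intro b₁ b₂ d₁ hd₁ d₂ hd₂
    have h := hjest z z b₁ b₂ c c d₁ hd₁ d₂ hd₂
    simpa using h
  have hExist : ∀ (x : X) (z : Z) (c : ℝ) (g : V),
      ∃ u : V, u ∈ KV ∧ ∀ v ∈ KV,
        (inner ℝ g (v - u) : ℝ) ≤ (inner ℝ (A x u) (v - u) : ℝ) + j z u c v - j z u c u :=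
    fun x z c g => (hQVI x z c g).exists
  choose sol hsolK hsolVI using hExist
  -- Step 2: Lipschitz dependence of solutions on the data
  have hdata : ∀ (x₁ x₂ : X) (z₁ z₂ : Z) (c₁ c₂ : ℝ) (g₁ g₂ : V) (u₁ u₂ : V),
      u₁ ∈ KV → u₂ ∈ KV →
      (∀ v ∈ KV, (inner ℝ g₁ (v - u₁) : ℝ) ≤
        (inner ℝ (A x₁ u₁) (v - u₁) : ℝ) + j z₁ u₁ c₁ v - j z₁ u₁ c₁ u₁) →
      (∀ v ∈ KV, (inner ℝ g₂ (v - u₂) : ℝ) ≤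
        (inner ℝ (A x₂ u₂) (v - u₂) : ℝ) + j z₂ u₂ c₂ v - j z₂ u₂ c₂ u₂) →
      (m - β) * ‖u₁ - u₂‖ ≤ L₁ * ‖x₁ - x₂‖ + α * ‖z₁ - z₂‖ + γ * |c₁ - c₂| + ‖g₁ - g₂‖ := by
    intro x₁ x₂ z₁ z₂ c₁ c₂ g₁ g₂ u₁ u₂ hu₁ hu₂ hvi₁ hvi₂
    have h1 := hvi₁ u₂ hu₂
    have h2 := hvi₂ u₁ hu₁
    have hflip : ∀ a : V, (inner ℝ a (u₂ - u₁) : ℝ) = -(inner ℝ a (u₁ - u₂) : ℝ) := by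
      intro a
      rw [show u₂ - u₁ = -(u₁ - u₂) by abel, inner_neg_right]
    rw [hflip, hflip] at h1
    have hmo := hA₃ x₁ u₁ hu₁ u₂ hu₂
    have hj := hjest z₁ z₂ u₁ u₂ c₁ c₂ u₁ hu₁ u₂ hu₂
    have hsplit1 : (inner ℝ (A x₁ u₁ - A x₁ u₂) (u₁ - u₂) : ℝ)
        + (inner ℝ (A x₁ u₂ - A x₂ u₂) (u₁ - u₂) : ℝ)
        = (inner ℝ (A x₁ u₁) (u₁ - u₂) : ℝ) - (inner ℝ (A x₂ u₂) (u₁ - u₂) : ℝ) := by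
      simp only [inner_sub_left]; ring
    have hsplitg : (inner ℝ (g₁ - g₂) (u₁ - u₂) : ℝ)
        = (inner ℝ g₁ (u₁ - u₂) : ℝ) - (inner ℝ g₂ (u₁ - u₂) : ℝ) := by
      simp only [inner_sub_left]
    have hb0 : |(inner ℝ (g₁ - g₂) (u₁ - u₂) : ℝ)| ≤ ‖g₁ - g₂‖ * ‖u₁ - u₂‖ :=
      abs_real_inner_le_norm _ _
    have hb2 : |(inner ℝ (A x₁ u₂ - A x₂ u₂) (u₁ - u₂) : ℝ)| ≤ L₁ * ‖x₁ - x₂‖ * ‖u₁ - u₂‖ :=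
      le_trans (abs_real_inner_le_norm _ _)
        (mul_le_mul_of_nonneg_right (hA₁ x₁ x₂ u₂ hu₂) (norm_nonneg _))
    have hqq : ‖u₁ - u₂‖ * ‖u₁ - u₂‖ = ‖u₁ - u₂‖ ^ 2 := (sq _).symm
    have habs := abs_le.1 hb0
    have hsq : (m - β) * ‖u₁ - u₂‖ ^ 2 ≤
        (L₁ * ‖x₁ - x₂‖ + α * ‖z₁ - z₂‖ + γ * |c₁ - c₂| + ‖g₁ - g₂‖) * ‖u₁ - u₂‖ := by
      have habs2 := abs_le.1 hb2
      linarith [h1, h2, hmo, hj, hsplit1, hsplitg, habs.2, habs2.1, habs2.2, hqq]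
    rcases eq_or_lt_of_le (norm_nonneg (u₁ - u₂)) with h0 | hpos
    · rw [← h0, mul_zero]
      positivity
    · by_contra hcon
      push_neg at hcon
      have := mul_lt_mul_of_pos_right hcon hpos
      nlinarith [this, hsq, hqq]
  have hsolLip : ∀ (x₁ x₂ : X) (z₁ z₂ : Z) (c₁ c₂ : ℝ) (g₁ g₂ : V),
      (m - β) * ‖sol x₁ z₁ c₁ g₁ - sol x₂ z₂ c₂ g₂‖ ≤
        L₁ * ‖x₁ - x₂‖ + α * ‖z₁ - z₂‖ + γ * |c₁ - c₂| + ‖g₁ - g₂‖ :=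
    fun x₁ x₂ z₁ z₂ c₁ c₂ g₁ g₂ =>
      hdata x₁ x₂ z₁ z₂ c₁ c₂ g₁ g₂ _ _ (hsolK x₁ z₁ c₁ g₁) (hsolK x₂ z₂ c₂ g₂)
        (hsolVI x₁ z₁ c₁ g₁) (hsolVI x₂ z₂ c₂ g₂)
  set c₀ : ℝ := (L₁ + α + γ + 1) / (m - β) with hc₀
  have hc₀0 : 0 ≤ c₀ := by positivity
  have hPlip : LipschitzWith (Real.toNNReal c₀)
      (fun p : X × Z × ℝ × V => sol p.1 p.2.1 p.2.2.1 p.2.2.2) := by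
    apply LipschitzWith.of_dist_le_mul
    intro p q
    rw [Real.coe_toNNReal _ hc₀0, dist_eq_norm]
    have h := hsolLip p.1 q.1 p.2.1 q.2.1 p.2.2.1 q.2.2.1 p.2.2.2 q.2.2.2
    have d2 : dist p.2 q.2 ≤ dist p q := by rw [Prod.dist_eq]; exact le_max_right _ _
    have d22 : dist p.2.2 q.2.2 ≤ dist p q := by
      refine le_trans ?_ d2; rw [Prod.dist_eq]; exact le_max_right _ _
    have d1 : ‖p.1 - q.1‖ ≤ dist p q := by
      rw [← dist_eq_norm]; rw [Prod.dist_eq]; exact le_max_left _ _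
    have dz : ‖p.2.1 - q.2.1‖ ≤ dist p q := by
      rw [← dist_eq_norm]; refine le_trans ?_ d2; rw [Prod.dist_eq]; exact le_max_left _ _
    have dc : |p.2.2.1 - q.2.2.1| ≤ dist p q := by
      rw [← Real.dist_eq]; refine le_trans ?_ d22; rw [Prod.dist_eq]; exact le_max_left _ _
    have dg : ‖p.2.2.2 - q.2.2.2‖ ≤ dist p q := by
      rw [← dist_eq_norm]; refine le_trans ?_ d22; rw [Prod.dist_eq]; exact le_max_right _ _
    have hsum : L₁ * ‖p.1 - q.1‖ + α * ‖p.2.1 - q.2.1‖ + γ * |p.2.2.1 - q.2.2.1|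
        + ‖p.2.2.2 - q.2.2.2‖ ≤ (L₁ + α + γ + 1) * dist p q := by
      have b1 := mul_le_mul_of_nonneg_left d1 hL₁.le
      have b2 := mul_le_mul_of_nonneg_left dz hα.le
      have b3 := mul_le_mul_of_nonneg_left dc hγ.le
      nlinarith [b1, b2, b3, dg]
    rw [hc₀, div_mul_eq_mul_div, le_div_iff₀ hmβ']
    calc ‖sol p.1 p.2.1 p.2.2.1 p.2.2.2 - sol q.1 q.2.1 q.2.2.1 q.2.2.2‖ * (m - β)
        = (m - β) * ‖sol p.1 p.2.1 p.2.2.1 p.2.2.2 - sol q.1 q.2.1 q.2.2.1 q.2.2.2‖ := by ring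
      _ ≤ L₁ * ‖p.1 - q.1‖ + α * ‖p.2.1 - q.2.1‖ + γ * |p.2.2.1 - q.2.2.1|
          + ‖p.2.2.2 - q.2.2.2‖ := h
      _ ≤ (L₁ + α + γ + 1) * dist p q := hsum
  have hcontSol : ∀ η : C(Set.Icc (0:ℝ) T, V),
      Continuous fun t : Set.Icc (0:ℝ) T => sol (R η ξ t) (S η t) (w t) (f t) := by
    intro η
    have hc : Continuous fun t : Set.Icc (0:ℝ) T =>
        ((R η ξ t, (S η t, (w t, f t))) : X × Z × ℝ × V) :=
      ((R η ξ).continuous.prodMk ((S η).continuous.prodMk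
        (w.continuous.prodMk f.continuous)))
    exact hPlip.continuous.comp hc
  -- the set of admissible trajectories
  set Eset : Set C(Set.Icc (0:ℝ) T, V) := {η | ∀ t, η t ∈ KV} with hEset
  have hEcl : IsClosed Eset := by
    have : Eset = ⋂ t : Set.Icc (0:ℝ) T, (fun η : C(Set.Icc (0:ℝ) T, V) => η t) ⁻¹' KV := by
      ext η; simp [hEset]
    rw [this]
    exact isClosed_iInter fun t => hKVcl.preimage (continuous_eval_const t)
  obtain ⟨v₀, hv₀⟩ := hKVne
  have hEne : Eset.Nonempty := ⟨ContinuousMap.const _ v₀, fun t => hv₀⟩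
  haveI : Nonempty Eset := hEne.to_subtype
  haveI : CompleteSpace Eset := hEcl.completeSpace_coe
  -- the fixed point operator
  set Λ : Eset → Eset := fun η => ⟨⟨fun t => sol (R η.1 ξ t) (S η.1 t) (w t) (f t),
    hcontSol η.1⟩, fun t => hsolK _ _ _ _⟩ with hΛ
  set C : ℝ := (L₁ * r₁ + α * s) / (m - β) with hCdef
  have hC0 : 0 ≤ C := by positivity
  have hint_cont : ∀ η₁ η₂ : Eset, Continuous fun σ : ℝ =>
      ‖η₁.1 (Set.projIcc 0 T hT.le σ) - η₂.1 (Set.projIcc 0 T hT.le σ)‖ := by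
    intro η₁ η₂
    exact ((η₁.1.continuous.comp continuous_projIcc).sub
      (η₂.1.continuous.comp continuous_projIcc)).norm
  have hΛest : ∀ η₁ η₂ : Eset, ∀ t : Set.Icc (0:ℝ) T,
      ‖(Λ η₁).1 t - (Λ η₂).1 t‖ ≤ C * ∫ σ in (0:ℝ)..(t:ℝ),
        ‖η₁.1 (Set.projIcc 0 T hT.le σ) - η₂.1 (Set.projIcc 0 T hT.le σ)‖ := by
    intro η₁ η₂ t
    have h := hsolLip (R η₁.1 ξ t) (R η₂.1 ξ t) (S η₁.1 t) (S η₂.1 t)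
      (w t) (w t) (f t) (f t)
    simp only [sub_self, abs_zero, norm_zero, mul_zero, add_zero] at h
    have hRb := hR₁ η₁.1 η₂.1 ξ η₁.2 η₂.2 hξ t
    have hSb := hS η₁.1 η₂.1 η₁.2 η₂.2 t
    set IN : ℝ := ∫ σ in (0:ℝ)..(t:ℝ),
      ‖η₁.1 (Set.projIcc 0 T hT.le σ) - η₂.1 (Set.projIcc 0 T hT.le σ)‖ with hIN
    have hINn : 0 ≤ IN := by
      rw [hIN]
      apply intervalIntegral.integral_nonneg t.2.1
      intro σ _; positivity
    have hb1 := mul_le_mul_of_nonneg_left hRb hL₁.le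
    have hb2 := mul_le_mul_of_nonneg_left hSb hα.le
    have heq : (m - β) * (C * IN) = (L₁ * r₁ + α * s) * IN := by
      rw [hCdef]; field_simp
    have hmain : (m - β) * ‖(Λ η₁).1 t - (Λ η₂).1 t‖ ≤ (m - β) * (C * IN) := by
      rw [heq]
      have : (m - β) * ‖(Λ η₁).1 t - (Λ η₂).1 t‖ ≤
          L₁ * ‖R η₁.1 ξ t - R η₂.1 ξ t‖ + α * ‖S η₁.1 t - S η₂.1 t‖ := h
      nlinarith [hb1, hb2]
    exact le_of_mul_le_mul_left hmain hmβ'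
  -- iterates
  have hiter : ∀ n : ℕ, ∀ η₁ η₂ : Eset, ∀ t : Set.Icc (0:ℝ) T,
      ‖((Λ^[n]) η₁).1 t - ((Λ^[n]) η₂).1 t‖ ≤
        C ^ n * (t:ℝ) ^ n / (n.factorial : ℝ) * dist η₁ η₂ := by
    intro n
    induction n with
    | zero =>
      intro η₁ η₂ t
      simp only [Function.iterate_zero_apply, pow_zero, Nat.factorial_zero,
        Nat.cast_one, one_mul, mul_one, div_one]
      rw [← dist_eq_norm]
      calc dist (η₁.1 t) (η₂.1 t) ≤ dist η₁.1 η₂.1 := ContinuousMap.dist_apply_le_dist t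
        _ = dist η₁ η₂ := (Subtype.dist_eq η₁ η₂).symm
    | succ n ih =>
      intro η₁ η₂ t
      rw [Function.iterate_succ_apply', Function.iterate_succ_apply']
      refine le_trans (hΛest ((Λ^[n]) η₁) ((Λ^[n]) η₂) t) ?_
      have hptwise : ∀ σ ∈ Set.Icc (0:ℝ) (t:ℝ),
          ‖((Λ^[n]) η₁).1 (Set.projIcc 0 T hT.le σ) - ((Λ^[n]) η₂).1 (Set.projIcc 0 T hT.le σ)‖
          ≤ C ^ n * σ ^ n / (n.factorial : ℝ) * dist η₁ η₂ := by
        intro σ hσ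
        have hσT : σ ∈ Set.Icc (0:ℝ) T := ⟨hσ.1, hσ.2.trans t.2.2⟩
        have hh := ih η₁ η₂ (Set.projIcc 0 T hT.le σ)
        rw [Set.projIcc_of_mem hT.le hσT] at hh
        rw [Set.projIcc_of_mem hT.le hσT]
        exact hh
      have hintle : (∫ σ in (0:ℝ)..(t:ℝ),
            ‖((Λ^[n]) η₁).1 (Set.projIcc 0 T hT.le σ) - ((Λ^[n]) η₂).1 (Set.projIcc 0 T hT.le σ)‖)
          ≤ ∫ σ in (0:ℝ)..(t:ℝ), C ^ n * σ ^ n / (n.factorial : ℝ) * dist η₁ η₂ := by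
        apply intervalIntegral.integral_mono_on t.2.1
        · exact (hint_cont _ _).intervalIntegrable _ _
        · apply Continuous.intervalIntegrable
          fun_prop
        · exact hptwise
      have hval : (∫ σ in (0:ℝ)..(t:ℝ), C ^ n * σ ^ n / (n.factorial : ℝ) * dist η₁ η₂)
          = C ^ n * (t:ℝ) ^ (n+1) / ((n+1) * (n.factorial : ℝ)) * dist η₁ η₂ := by
        have : (fun σ : ℝ => C ^ n * σ ^ n / (n.factorial : ℝ) * dist η₁ η₂)
            = fun σ : ℝ => (C ^ n / (n.factorial : ℝ) * dist η₁ η₂) * σ ^ n := by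
          funext σ; ring
        rw [this, intervalIntegral.integral_const_mul, integral_pow]
        field_simp
        ring
      rw [hval] at hintle
      have := mul_le_mul_of_nonneg_left hintle hC0
      refine le_trans this (le_of_eq ?_)
      rw [Nat.factorial_succ]
      push_cast
      field_simp
      ring
  -- distance bound for iterates
  have hdistit : ∀ n : ℕ, ∀ η₁ η₂ : Eset,
      dist ((Λ^[n]) η₁) ((Λ^[n]) η₂) ≤ C ^ n * T ^ n / (n.factorial : ℝ) * dist η₁ η₂ := by
    intro n η₁ η₂
    rw [Subtype.dist_eq]
    have hb : 0 ≤ C ^ n * T ^ n / (n.factorial : ℝ) * dist η₁ η₂ := by positivity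
    rw [ContinuousMap.dist_le hb]
    intro t
    rw [dist_eq_norm]
    refine le_trans (hiter n η₁ η₂ t) ?_
    have ht : (t:ℝ) ^ n ≤ T ^ n := pow_le_pow_left₀ t.2.1 t.2.2 n
    have h1 : C ^ n * (t:ℝ) ^ n / (n.factorial : ℝ) ≤ C ^ n * T ^ n / (n.factorial : ℝ) := by
      apply div_le_div_of_nonneg_right ?_ ?_ |>.trans_eq rfl
      · exact mul_le_mul_of_nonneg_left ht (by positivity)
      · positivity
    exact mul_le_mul_of_nonneg_right h1 dist_nonneg
  -- choose a contracting iterate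
  obtain ⟨n, hn⟩ : ∃ n : ℕ, C ^ n * T ^ n / (n.factorial : ℝ) < 1 := by
    have htd := FloorSemiring.tendsto_pow_div_factorial_atTop (K := ℝ) (C * T)
    have := (htd.eventually (gt_mem_nhds one_pos)).exists
    obtain ⟨n, hn⟩ := this
    exact ⟨n, by rwa [mul_pow] at hn⟩
  set q : NNReal := Real.toNNReal (C ^ n * T ^ n / (n.factorial : ℝ)) with hq
  have hq1 : q < 1 := by
    rw [hq, ← Real.toNNReal_one, Real.toNNReal_lt_toNNReal_iff (by norm_num)]
    exact hn
  have hcon : ContractingWith q (Λ^[n]) := by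
    refine ⟨hq1, LipschitzWith.of_dist_le_mul ?_⟩
    intro η₁ η₂
    rw [hq, Real.coe_toNNReal _ (by positivity)]
    exact hdistit n η₁ η₂
  set ηs : Eset := ContractingWith.fixedPoint (Λ^[n]) hcon with hηs
  have hfixΛ : Λ ηs = ηs := hcon.isFixedPt_fixedPoint_iterate
  -- pointwise identification
  have hηs_eq : ∀ t : Set.Icc (0:ℝ) T,
      sol (R ηs.1 ξ t) (S ηs.1 t) (w t) (f t) = ηs.1 t := by
    intro t
    exact congrArg (fun e : Eset => e.1 t) hfixΛ
  refine ⟨ηs.1, ⟨ηs.2, ?_⟩, ?_⟩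
  · intro t v hv
    have h := hsolVI (R ηs.1 ξ t) (S ηs.1 t) (w t) (f t) v hv
    rw [hηs_eq t] at h
    exact h
  · rintro η' ⟨hK', hVI'⟩
    set η'' : Eset := ⟨η', hK'⟩ with hη''
    have hfix' : Λ η'' = η'' := by
      apply Subtype.ext
      apply ContinuousMap.ext
      intro t
      have hu := hQVI (R η' ξ t) (S η' t) (w t) (f t)
      have e1 := hu.unique
        ⟨hsolK (R η' ξ t) (S η' t) (w t) (f t), hsolVI (R η' ξ t) (S η' t) (w t) (f t)⟩
        ⟨hK' t, fun v hv => hVI' t v hv⟩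
      exact e1
    have hfixit : Function.IsFixedPt (Λ^[n]) η'' :=
      (show Function.IsFixedPt Λ η'' from hfix').iterate n
    have : η'' = ηs := hcon.fixedPoint_unique hfixit
    exact congrArg Subtype.val this
end

section
/- Let V be a real Hilbert space, X and Z real Banach spaces, K_V ⊆ V nonempty closed convex, and assume hypotheses H(A) (with constants L₁, L₂, m) and H(j) (with constants α, β, γ). For i = 1, 2 let yᵢ ∈ X, zᵢ ∈ Z, uᵢ ∈ V, wᵢ ∈ ℝ, fᵢ ∈ V, and let ηᵢ ∈ K_V satisfy ⟨A(yᵢ, ηᵢ), v − ηᵢ⟩_V + j(zᵢ, uᵢ, wᵢ, v) − j(zᵢ, uᵢ, wᵢ, ηᵢ) ≥ ⟨fᵢ, v − ηᵢ⟩_V for all v ∈ K_V. Then m‖η₁ − η₂‖_V ≤ L₁‖y₁ − y₂‖_X + α‖z₁ − z₂‖_Z + β‖u₁ − u₂‖_V + γ|w₁ − w₂| + ‖f₁ − f₂‖_V. -/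
/-- Stability estimate for solutions of the elliptic quasivariational inequality:
under H(A) and H(j), two solutions `η₁, η₂` corresponding to data
`(yᵢ, zᵢ, uᵢ, wᵢ, fᵢ)` satisfy
`m‖η₁ − η₂‖ ≤ L₁‖y₁ − y₂‖ + α‖z₁ − z₂‖ + β‖u₁ − u₂‖ + γ|w₁ − w₂| + ‖f₁ − f₂‖`. -/
theorem stmt4
    {V : Type*} [NormedAddCommGroup V] [InnerProductSpace ℝ V] [CompleteSpace V]
    {X : Type*} [NormedAddCommGroup X] [NormedSpace ℝ X] [CompleteSpace X]
    {Z : Type*} [NormedAddCommGroup Z] [NormedSpace ℝ Z] [CompleteSpace Z]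
    (KV : Set V) (hKVne : KV.Nonempty) (hKVcl : IsClosed KV) (hKVcv : Convex ℝ KV)
    -- H(A)
    (A : X → V → V) (L₁ L₂ m : ℝ) (hL₁ : 0 < L₁) (hL₂ : 0 < L₂) (hm : 0 < m)
    (hA₁ : ∀ (a₁ a₂ : X), ∀ b ∈ KV, ‖A a₁ b - A a₂ b‖ ≤ L₁ * ‖a₁ - a₂‖)
    (hA₂ : ∀ (a : X), ∀ b₁ ∈ KV, ∀ b₂ ∈ KV, ‖A a b₁ - A a b₂‖ ≤ L₂ * ‖b₁ - b₂‖)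
    (hA₃ : ∀ (a : X), ∀ b₁ ∈ KV, ∀ b₂ ∈ KV,
      m * ‖b₁ - b₂‖ ^ 2 ≤ (inner ℝ (A a b₁ - A a b₂) (b₁ - b₂) : ℝ))
    -- H(j)
    (j : Z → V → ℝ → V → ℝ) (α β γ : ℝ) (hα : 0 < α) (hβ : 0 < β) (hγ : 0 < γ)
    (hjcv : ∀ (a : Z) (b : V) (c : ℝ), ConvexOn ℝ KV (j a b c))
    (hjlsc : ∀ (a : Z) (b : V) (c : ℝ), LowerSemicontinuousOn (j a b c) KV)
    (hjest : ∀ (a₁ a₂ : Z) (b₁ b₂ : V) (c₁ c₂ : ℝ), ∀ d₁ ∈ KV, ∀ d₂ ∈ KV,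
      j a₁ b₁ c₁ d₂ - j a₁ b₁ c₁ d₁ + j a₂ b₂ c₂ d₁ - j a₂ b₂ c₂ d₂ ≤
        α * ‖a₁ - a₂‖ * ‖d₁ - d₂‖ + β * ‖b₁ - b₂‖ * ‖d₁ - d₂‖ +
          γ * |c₁ - c₂| * ‖d₁ - d₂‖)
    -- data and solutions
    (y₁ y₂ : X) (z₁ z₂ : Z) (u₁ u₂ : V) (w₁ w₂ : ℝ) (f₁ f₂ : V)
    (η₁ η₂ : V) (hη₁ : η₁ ∈ KV) (hη₂ : η₂ ∈ KV)
    (hvi₁ : ∀ v ∈ KV, (inner ℝ (A y₁ η₁) (v - η₁) : ℝ) + j z₁ u₁ w₁ v - j z₁ u₁ w₁ η₁ ≥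
      (inner ℝ f₁ (v - η₁) : ℝ))
    (hvi₂ : ∀ v ∈ KV, (inner ℝ (A y₂ η₂) (v - η₂) : ℝ) + j z₂ u₂ w₂ v - j z₂ u₂ w₂ η₂ ≥
      (inner ℝ f₂ (v - η₂) : ℝ)) :
    m * ‖η₁ - η₂‖ ≤ L₁ * ‖y₁ - y₂‖ + α * ‖z₁ - z₂‖ + β * ‖u₁ - u₂‖ +
      γ * |w₁ - w₂| + ‖f₁ - f₂‖ := by
  set e := η₁ - η₂ with he
  have h1 := hvi₁ η₂ hη₂
  have h2 := hvi₂ η₁ hη₁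
  have hj := hjest z₁ z₂ u₁ u₂ w₁ w₂ η₁ hη₁ η₂ hη₂
  have hmono := hA₃ y₂ η₁ hη₁ η₂ hη₂
  have hlip := hA₁ y₁ y₂ η₁ hη₁
  -- inner product manipulations
  have hi1 : (inner ℝ (A y₁ η₁ - A y₂ η₂) e : ℝ)
      ≤ (j z₁ u₁ w₁ η₂ - j z₁ u₁ w₁ η₁ + j z₂ u₂ w₂ η₁ - j z₂ u₂ w₂ η₂)
        + (inner ℝ (f₁ - f₂) e : ℝ) := by
    have e1 : (η₂ - η₁ : V) = -e := by rw [he]; abel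
    have e2 : (η₁ - η₂ : V) = e := rfl
    rw [e1] at h1
    rw [e2] at h2
    simp only [inner_neg_right, inner_sub_left] at *
    linarith
  have hsplit : (inner ℝ (A y₂ η₁ - A y₂ η₂) e : ℝ)
      = (inner ℝ (A y₁ η₁ - A y₂ η₂) e : ℝ) - (inner ℝ (A y₁ η₁ - A y₂ η₁) e : ℝ) := by
    rw [inner_sub_left, inner_sub_left, inner_sub_left]; ring
  have hcs1 : (inner ℝ (A y₁ η₁ - A y₂ η₁) e : ℝ) ≥ -(L₁ * ‖y₁ - y₂‖ * ‖e‖) := by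
    have := abs_real_inner_le_norm (A y₁ η₁ - A y₂ η₁) e
    have h' : |(inner ℝ (A y₁ η₁ - A y₂ η₁) e : ℝ)| ≤ L₁ * ‖y₁ - y₂‖ * ‖e‖ := by
      refine this.trans ?_
      exact mul_le_mul_of_nonneg_right hlip (norm_nonneg _)
    linarith [neg_abs_le (inner ℝ (A y₁ η₁ - A y₂ η₁) e : ℝ)]
  have hcs2 : (inner ℝ (f₁ - f₂) e : ℝ) ≤ ‖f₁ - f₂‖ * ‖e‖ := by
    have := abs_real_inner_le_norm (f₁ - f₂) e
    linarith [le_abs_self (inner ℝ (f₁ - f₂) e : ℝ)]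
  have key : m * ‖e‖ ^ 2 ≤ (L₁ * ‖y₁ - y₂‖ + α * ‖z₁ - z₂‖ + β * ‖u₁ - u₂‖ +
      γ * |w₁ - w₂| + ‖f₁ - f₂‖) * ‖e‖ := by
    have := hmono
    nlinarith [hi1, hsplit, hcs1, hcs2, hj]
  rcases eq_or_lt_of_le (norm_nonneg e) with h0 | h0
  · rw [← h0]
    have : (0:ℝ) ≤ L₁ * ‖y₁ - y₂‖ + α * ‖z₁ - z₂‖ + β * ‖u₁ - u₂‖ +
        γ * |w₁ - w₂| + ‖f₁ - f₂‖ := by positivity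
    linarith
  · have := mul_le_mul_of_nonneg_right (le_of_lt h0) (le_of_lt h0)
    nlinarith [key]
end

section
/- Let T > 0, I = [0,T], V a real Hilbert space, X, Z real Banach spaces, Y₁ a real Hilbert space, K_V ⊆ V nonempty closed convex, K_Y ⊆ Y₁ nonempty convex. Assume H(A) (constants L₁, L₂, m), H(j) (constants α, β, γ), H(R) (constants r₁, r₂), H(S) (constant s). Fix a continuous ξ : I → Y₁ with values in K_Y, a continuous w : I → ℝ, and f ∈ C(I; V). For u₁, u₂ ∈ C(I; K_V) let η₁, η₂ ∈ C(I; K_V) be such that for i = 1, 2, all t ∈ I and all v ∈ K_V: ⟨A(R(uᵢ, ξ)(t), ηᵢ(t)), v − ηᵢ(t)⟩_V + j(Suᵢ(t), uᵢ(t), w(t), v) − j(Suᵢ(t), uᵢ(t), w(t), ηᵢ(t)) ≥ ⟨f(t), v − ηᵢ(t)⟩_V. Then for all t ∈ I: m‖η₁(t) − η₂(t)‖_V ≤ (L₁r₁ + αs)∫₀ᵗ‖u₁(σ) − u₂(σ)‖_V dσ + β‖u₁(t) − u₂(t)‖_V. -/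
open scoped ContinuousMap

/-- The contraction estimate for the fixed-point operator `Λ` in the proof of
Theorem 3.1: if `ηᵢ` solves the quasivariational inequality frozen at `uᵢ`
(`i = 1, 2`), then for all `t ∈ I`,
`m‖η₁(t) − η₂(t)‖ ≤ (L₁r₁ + αs)∫₀ᵗ‖u₁ − u₂‖ + β‖u₁(t) − u₂(t)‖`. -/
theorem stmt5
    {V : Type*} [NormedAddCommGroup V] [InnerProductSpace ℝ V] [CompleteSpace V]
    {X : Type*} [NormedAddCommGroup X] [NormedSpace ℝ X] [CompleteSpace X]
    {Z : Type*} [NormedAddCommGroup Z] [NormedSpace ℝ Z] [CompleteSpace Z]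
    {Y₁ : Type*} [NormedAddCommGroup Y₁] [InnerProductSpace ℝ Y₁] [CompleteSpace Y₁]
    (T : ℝ) (hT : 0 < T)
    (KV : Set V) (hKVne : KV.Nonempty) (hKVcl : IsClosed KV) (hKVcv : Convex ℝ KV)
    (KY : Set Y₁) (hKYne : KY.Nonempty) (hKYcv : Convex ℝ KY)
    -- H(A)
    (A : X → V → V) (L₁ L₂ m : ℝ) (hL₁ : 0 < L₁) (hL₂ : 0 < L₂) (hm : 0 < m)
    (hA₁ : ∀ (a₁ a₂ : X), ∀ b ∈ KV, ‖A a₁ b - A a₂ b‖ ≤ L₁ * ‖a₁ - a₂‖)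
    (hA₂ : ∀ (a : X), ∀ b₁ ∈ KV, ∀ b₂ ∈ KV, ‖A a b₁ - A a b₂‖ ≤ L₂ * ‖b₁ - b₂‖)
    (hA₃ : ∀ (a : X), ∀ b₁ ∈ KV, ∀ b₂ ∈ KV,
      m * ‖b₁ - b₂‖ ^ 2 ≤ (inner ℝ (A a b₁ - A a b₂) (b₁ - b₂) : ℝ))
    -- H(j)
    (j : Z → V → ℝ → V → ℝ) (α β γ : ℝ) (hα : 0 < α) (hβ : 0 < β) (hγ : 0 < γ)
    (hjcv : ∀ (a : Z) (b : V) (c : ℝ), ConvexOn ℝ KV (j a b c))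
    (hjlsc : ∀ (a : Z) (b : V) (c : ℝ), LowerSemicontinuousOn (j a b c) KV)
    (hjest : ∀ (a₁ a₂ : Z) (b₁ b₂ : V) (c₁ c₂ : ℝ), ∀ d₁ ∈ KV, ∀ d₂ ∈ KV,
      j a₁ b₁ c₁ d₂ - j a₁ b₁ c₁ d₁ + j a₂ b₂ c₂ d₁ - j a₂ b₂ c₂ d₂ ≤
        α * ‖a₁ - a₂‖ * ‖d₁ - d₂‖ + β * ‖b₁ - b₂‖ * ‖d₁ - d₂‖ +
          γ * |c₁ - c₂| * ‖d₁ - d₂‖)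
    -- H(R)
    (R : C(Set.Icc (0:ℝ) T, V) → C(Set.Icc (0:ℝ) T, Y₁) → C(Set.Icc (0:ℝ) T, X))
    (r₁ r₂ : ℝ) (hr₁ : 0 < r₁) (hr₂ : 0 < r₂)
    (hR₁ : ∀ (a₁ a₂ : C(Set.Icc (0:ℝ) T, V)) (b : C(Set.Icc (0:ℝ) T, Y₁)),
      (∀ t, a₁ t ∈ KV) → (∀ t, a₂ t ∈ KV) → (∀ t, b t ∈ KY) →
      ∀ t : Set.Icc (0:ℝ) T, ‖R a₁ b t - R a₂ b t‖ ≤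
        r₁ * ∫ σ in (0:ℝ)..(t:ℝ),
          ‖a₁ (Set.projIcc 0 T hT.le σ) - a₂ (Set.projIcc 0 T hT.le σ)‖)
    (hR₂ : ∀ (a : C(Set.Icc (0:ℝ) T, V)) (b₁ b₂ : C(Set.Icc (0:ℝ) T, Y₁)),
      (∀ t, a t ∈ KV) → (∀ t, b₁ t ∈ KY) → (∀ t, b₂ t ∈ KY) →
      ∀ t : Set.Icc (0:ℝ) T, ‖R a b₁ t - R a b₂ t‖ ≤
        r₂ * ∫ σ in (0:ℝ)..(t:ℝ),
          ‖b₁ (Set.projIcc 0 T hT.le σ) - b₂ (Set.projIcc 0 T hT.le σ)‖)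
    -- H(S)
    (S : C(Set.Icc (0:ℝ) T, V) → C(Set.Icc (0:ℝ) T, Z)) (s : ℝ) (hs : 0 < s)
    (hS : ∀ (a₁ a₂ : C(Set.Icc (0:ℝ) T, V)),
      (∀ t, a₁ t ∈ KV) → (∀ t, a₂ t ∈ KV) →
      ∀ t : Set.Icc (0:ℝ) T, ‖S a₁ t - S a₂ t‖ ≤
        s * ∫ σ in (0:ℝ)..(t:ℝ),
          ‖a₁ (Set.projIcc 0 T hT.le σ) - a₂ (Set.projIcc 0 T hT.le σ)‖)
    -- fixed data
    (ξ : C(Set.Icc (0:ℝ) T, Y₁)) (hξ : ∀ t, ξ t ∈ KY)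
    (w : C(Set.Icc (0:ℝ) T, ℝ))
    (f : C(Set.Icc (0:ℝ) T, V))
    -- the two frozen inputs and corresponding solutions
    (u₁ u₂ η₁ η₂ : C(Set.Icc (0:ℝ) T, V))
    (hu₁ : ∀ t, u₁ t ∈ KV) (hu₂ : ∀ t, u₂ t ∈ KV)
    (hη₁ : ∀ t, η₁ t ∈ KV) (hη₂ : ∀ t, η₂ t ∈ KV)
    (hvi₁ : ∀ t : Set.Icc (0:ℝ) T, ∀ v ∈ KV,
      (inner ℝ (A (R u₁ ξ t) (η₁ t)) (v - η₁ t) : ℝ) +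
          j (S u₁ t) (u₁ t) (w t) v - j (S u₁ t) (u₁ t) (w t) (η₁ t) ≥
        (inner ℝ (f t) (v - η₁ t) : ℝ))
    (hvi₂ : ∀ t : Set.Icc (0:ℝ) T, ∀ v ∈ KV,
      (inner ℝ (A (R u₂ ξ t) (η₂ t)) (v - η₂ t) : ℝ) +
          j (S u₂ t) (u₂ t) (w t) v - j (S u₂ t) (u₂ t) (w t) (η₂ t) ≥
        (inner ℝ (f t) (v - η₂ t) : ℝ)) :
    ∀ t : Set.Icc (0:ℝ) T,
      m * ‖η₁ t - η₂ t‖ ≤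
        (L₁ * r₁ + α * s) * (∫ σ in (0:ℝ)..(t:ℝ),
            ‖u₁ (Set.projIcc 0 T hT.le σ) - u₂ (Set.projIcc 0 T hT.le σ)‖) +
          β * ‖u₁ t - u₂ t‖ := by
  intro t
  set a₁ := R u₁ ξ t with ha₁
  set a₂ := R u₂ ξ t with ha₂
  set e₁ := η₁ t with he₁
  set e₂ := η₂ t with he₂
  set N := ‖e₁ - e₂‖ with hN
  set U := ‖u₁ t - u₂ t‖ with hU
  set D := ‖S u₁ t - S u₂ t‖ with hD
  set J := (∫ σ in (0:ℝ)..(t:ℝ),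
      ‖u₁ (Set.projIcc 0 T hT.le σ) - u₂ (Set.projIcc 0 T hT.le σ)‖) with hJ
  have hJ0 : 0 ≤ J := by
    apply intervalIntegral.integral_nonneg t.2.1
    intro x _; exact norm_nonneg _
  have hN0 : 0 ≤ N := norm_nonneg _
  have hU0 : 0 ≤ U := norm_nonneg _
  -- key inner product estimates
  have e1 := hvi₁ t e₂ (hη₂ t)
  have e2 := hvi₂ t e₁ (hη₁ t)
  have hj := hjest (S u₁ t) (S u₂ t) (u₁ t) (u₂ t) (w t) (w t) e₁ (hη₁ t) e₂ (hη₂ t)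
  have hmono := hA₃ a₁ e₁ (hη₁ t) e₂ (hη₂ t)
  have hA1 := hA₁ a₁ a₂ e₂ (hη₂ t)
  -- rewrite inner products with common atoms
  have hflip : ∀ x : V, (inner ℝ x (e₂ - e₁) : ℝ) = -(inner ℝ x (e₁ - e₂) : ℝ) := by
    intro x
    rw [show e₂ - e₁ = -(e₁ - e₂) by abel, inner_neg_right]
  rw [hflip, hflip] at e1
  have hcs : (inner ℝ (A a₂ e₂) (e₁ - e₂) : ℝ) - (inner ℝ (A a₁ e₂) (e₁ - e₂) : ℝ)
      ≤ L₁ * ‖a₁ - a₂‖ * N := by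
    have h1 : (inner ℝ (A a₂ e₂ - A a₁ e₂) (e₁ - e₂) : ℝ)
        ≤ ‖A a₂ e₂ - A a₁ e₂‖ * N := by
      have h := abs_real_inner_le_norm (A a₂ e₂ - A a₁ e₂) (e₁ - e₂)
      have h' := le_abs_self ((inner ℝ (A a₂ e₂ - A a₁ e₂) (e₁ - e₂) : ℝ))
      simp only [hN]
      linarith
    rw [inner_sub_left] at h1
    have h2 : ‖A a₂ e₂ - A a₁ e₂‖ = ‖A a₁ e₂ - A a₂ e₂‖ := norm_sub_rev _ _
    have h3 : ‖A a₁ e₂ - A a₂ e₂‖ * N ≤ L₁ * ‖a₁ - a₂‖ * N :=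
      mul_le_mul_of_nonneg_right hA1 hN0
    rw [h2] at h1
    linarith
  rw [inner_sub_left] at hmono
  simp only [← he₁, ← he₂, ← ha₁, ← ha₂, ← hN, ← hU, ← hD] at e1 e2 hj hmono
  have hwz : γ * |w t - w t| * N = 0 := by simp
  have hRb := hR₁ u₁ u₂ ξ hu₁ hu₂ hξ t
  have hSb := hS u₁ u₂ hu₁ hu₂ t
  simp only [← ha₁, ← ha₂, ← hD, ← hJ] at hRb hSb
  have hD0 : (0:ℝ) ≤ D := norm_nonneg _
  clear_value a₁ a₂ e₁ e₂ N U D J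
  have key0 : m * N ^ 2 ≤ L₁ * ‖a₁ - a₂‖ * N + α * D * N + β * U * N := by
    linarith [e1, e2, hj, hmono, hcs, hwz]
  have key : m * N ^ 2 ≤ (L₁ * ‖a₁ - a₂‖ + α * D + β * U) * N := by
    linarith [key0, (by ring : (L₁ * ‖a₁ - a₂‖ + α * D + β * U) * N =
      L₁ * ‖a₁ - a₂‖ * N + α * D * N + β * U * N)]
  have step : m * N ≤ L₁ * ‖a₁ - a₂‖ + α * D + β * U := by
    rcases eq_or_lt_of_le hN0 with h | h
    · rw [← h]; simp
      nlinarith [mul_nonneg hL₁.le (norm_nonneg (a₁ - a₂)),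
        mul_nonneg hα.le hD0, mul_nonneg hβ.le hU0]
    · have := le_of_mul_le_mul_right (by nlinarith [key] : (m * N) * N ≤
        (L₁ * ‖a₁ - a₂‖ + α * D + β * U) * N) h
      linarith
  have b1 : L₁ * ‖a₁ - a₂‖ ≤ L₁ * (r₁ * J) :=
    mul_le_mul_of_nonneg_left hRb hL₁.le
  have b2 : α * D ≤ α * (s * J) := mul_le_mul_of_nonneg_left hSb hα.le
  calc m * N ≤ L₁ * ‖a₁ - a₂‖ + α * D + β * U := step
    _ ≤ L₁ * (r₁ * J) + α * (s * J) + β * U := by linarith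
    _ = (L₁ * r₁ + α * s) * J + β * U := by ring
end

section
/- Let T > 0, I = [0,T], V a real Hilbert space, X, Z real Banach spaces, Y₁ a real Hilbert space, K_V ⊆ V nonempty closed convex, K_Y ⊆ Y₁ nonempty convex. Assume H(A) (constants L₁, L₂, m), H(j) (constants α, β, γ), H(R) (constants r₁, r₂), H(S) (constant s), with m > β. Fix a continuous ξ : I → Y₁ with values in K_Y and f ∈ C(I; V). For continuous functions w₁, w₂ : I → ℝ let η₁, η₂ ∈ C(I; K_V) be such that for i = 1, 2, all t ∈ I and all v ∈ K_V: ⟨A(R(ηᵢ, ξ)(t), ηᵢ(t)), v − ηᵢ(t)⟩_V + j(Sηᵢ(t), ηᵢ(t), wᵢ(t), v) − j(Sηᵢ(t), ηᵢ(t), wᵢ(t), ηᵢ(t)) ≥ ⟨f(t), v − ηᵢ(t)⟩_V. Then for all t ∈ I: ‖η₁(t) − η₂(t)‖_V ≤ ((L₁r₁ + αs)/(m − β)) ∫₀ᵗ‖η₁(σ) − η₂(σ)‖_V dσ + (γ/(m − β)) sup_{σ∈I}|w₁(σ) − w₂(σ)|. Moreover, if in addition m > β + T(L₁r₁ + αs),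 then sup_{t∈I}‖η₁(t) − η₂(t)‖_V ≤ (γ/(m − β − T(L₁r₁ + αs))) sup_{σ∈I}|w₁(σ) − w₂(σ)|. -/
open scoped ContinuousMap

/-- The estimate from the proof of Theorem 3.2: if `ηᵢ` solves the
quasivariational inequality with data `wᵢ` (`i = 1, 2`) and `m > β`, then
`‖η₁(t) − η₂(t)‖ ≤ ((L₁r₁ + αs)/(m − β)) ∫₀ᵗ‖η₁ − η₂‖ + (γ/(m − β)) sup|w₁ − w₂|`
for all `t`, and if moreover `m > β + T(L₁r₁ + αs)` then
`sup‖η₁ − η₂‖ ≤ (γ/(m − β − T(L₁r₁ + αs))) sup|w₁ − w₂|`. -/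
theorem stmt6
    {V : Type*} [NormedAddCommGroup V] [InnerProductSpace ℝ V] [CompleteSpace V]
    {X : Type*} [NormedAddCommGroup X] [NormedSpace ℝ X] [CompleteSpace X]
    {Z : Type*} [NormedAddCommGroup Z] [NormedSpace ℝ Z] [CompleteSpace Z]
    {Y₁ : Type*} [NormedAddCommGroup Y₁] [InnerProductSpace ℝ Y₁] [CompleteSpace Y₁]
    (T : ℝ) (hT : 0 < T)
    (KV : Set V) (hKVne : KV.Nonempty) (hKVcl : IsClosed KV) (hKVcv : Convex ℝ KV)
    (KY : Set Y₁) (hKYne : KY.Nonempty) (hKYcv : Convex ℝ KY)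
    -- H(A)
    (A : X → V → V) (L₁ L₂ m : ℝ) (hL₁ : 0 < L₁) (hL₂ : 0 < L₂) (hm : 0 < m)
    (hA₁ : ∀ (a₁ a₂ : X), ∀ b ∈ KV, ‖A a₁ b - A a₂ b‖ ≤ L₁ * ‖a₁ - a₂‖)
    (hA₂ : ∀ (a : X), ∀ b₁ ∈ KV, ∀ b₂ ∈ KV, ‖A a b₁ - A a b₂‖ ≤ L₂ * ‖b₁ - b₂‖)
    (hA₃ : ∀ (a : X), ∀ b₁ ∈ KV, ∀ b₂ ∈ KV,
      m * ‖b₁ - b₂‖ ^ 2 ≤ (inner ℝ (A a b₁ - A a b₂) (b₁ - b₂) : ℝ))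
    -- H(j)
    (j : Z → V → ℝ → V → ℝ) (α β γ : ℝ) (hα : 0 < α) (hβ : 0 < β) (hγ : 0 < γ)
    (hjcv : ∀ (a : Z) (b : V) (c : ℝ), ConvexOn ℝ KV (j a b c))
    (hjlsc : ∀ (a : Z) (b : V) (c : ℝ), LowerSemicontinuousOn (j a b c) KV)
    (hjest : ∀ (a₁ a₂ : Z) (b₁ b₂ : V) (c₁ c₂ : ℝ), ∀ d₁ ∈ KV, ∀ d₂ ∈ KV,
      j a₁ b₁ c₁ d₂ - j a₁ b₁ c₁ d₁ + j a₂ b₂ c₂ d₁ - j a₂ b₂ c₂ d₂ ≤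
        α * ‖a₁ - a₂‖ * ‖d₁ - d₂‖ + β * ‖b₁ - b₂‖ * ‖d₁ - d₂‖ +
          γ * |c₁ - c₂| * ‖d₁ - d₂‖)
    -- H(R)
    (R : C(Set.Icc (0:ℝ) T, V) → C(Set.Icc (0:ℝ) T, Y₁) → C(Set.Icc (0:ℝ) T, X))
    (r₁ r₂ : ℝ) (hr₁ : 0 < r₁) (hr₂ : 0 < r₂)
    (hR₁ : ∀ (a₁ a₂ : C(Set.Icc (0:ℝ) T, V)) (b : C(Set.Icc (0:ℝ) T, Y₁)),
      (∀ t, a₁ t ∈ KV) → (∀ t, a₂ t ∈ KV) → (∀ t, b t ∈ KY) →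
      ∀ t : Set.Icc (0:ℝ) T, ‖R a₁ b t - R a₂ b t‖ ≤
        r₁ * ∫ σ in (0:ℝ)..(t:ℝ),
          ‖a₁ (Set.projIcc 0 T hT.le σ) - a₂ (Set.projIcc 0 T hT.le σ)‖)
    (hR₂ : ∀ (a : C(Set.Icc (0:ℝ) T, V)) (b₁ b₂ : C(Set.Icc (0:ℝ) T, Y₁)),
      (∀ t, a t ∈ KV) → (∀ t, b₁ t ∈ KY) → (∀ t, b₂ t ∈ KY) →
      ∀ t : Set.Icc (0:ℝ) T, ‖R a b₁ t - R a b₂ t‖ ≤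
        r₂ * ∫ σ in (0:ℝ)..(t:ℝ),
          ‖b₁ (Set.projIcc 0 T hT.le σ) - b₂ (Set.projIcc 0 T hT.le σ)‖)
    -- H(S)
    (S : C(Set.Icc (0:ℝ) T, V) → C(Set.Icc (0:ℝ) T, Z)) (s : ℝ) (hs : 0 < s)
    (hS : ∀ (a₁ a₂ : C(Set.Icc (0:ℝ) T, V)),
      (∀ t, a₁ t ∈ KV) → (∀ t, a₂ t ∈ KV) →
      ∀ t : Set.Icc (0:ℝ) T, ‖S a₁ t - S a₂ t‖ ≤
        s * ∫ σ in (0:ℝ)..(t:ℝ),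
          ‖a₁ (Set.projIcc 0 T hT.le σ) - a₂ (Set.projIcc 0 T hT.le σ)‖)
    -- smallness condition
    (hmβ : β < m)
    -- fixed data
    (ξ : C(Set.Icc (0:ℝ) T, Y₁)) (hξ : ∀ t, ξ t ∈ KY)
    (f : C(Set.Icc (0:ℝ) T, V))
    -- the two wear inputs and corresponding solutions
    (w₁ w₂ : C(Set.Icc (0:ℝ) T, ℝ))
    (η₁ η₂ : C(Set.Icc (0:ℝ) T, V))
    (hη₁ : ∀ t, η₁ t ∈ KV) (hη₂ : ∀ t, η₂ t ∈ KV)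
    (hvi₁ : ∀ t : Set.Icc (0:ℝ) T, ∀ v ∈ KV,
      (inner ℝ (A (R η₁ ξ t) (η₁ t)) (v - η₁ t) : ℝ) +
          j (S η₁ t) (η₁ t) (w₁ t) v - j (S η₁ t) (η₁ t) (w₁ t) (η₁ t) ≥
        (inner ℝ (f t) (v - η₁ t) : ℝ))
    (hvi₂ : ∀ t : Set.Icc (0:ℝ) T, ∀ v ∈ KV,
      (inner ℝ (A (R η₂ ξ t) (η₂ t)) (v - η₂ t) : ℝ) +
          j (S η₂ t) (η₂ t) (w₂ t) v - j (S η₂ t) (η₂ t) (w₂ t) (η₂ t) ≥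
        (inner ℝ (f t) (v - η₂ t) : ℝ)) :
    (∀ t : Set.Icc (0:ℝ) T,
      ‖η₁ t - η₂ t‖ ≤
        ((L₁ * r₁ + α * s) / (m - β)) * (∫ σ in (0:ℝ)..(t:ℝ),
            ‖η₁ (Set.projIcc 0 T hT.le σ) - η₂ (Set.projIcc 0 T hT.le σ)‖) +
          (γ / (m - β)) * ⨆ σ : Set.Icc (0:ℝ) T, |w₁ σ - w₂ σ|) ∧
    (β + T * (L₁ * r₁ + α * s) < m →
      (⨆ t : Set.Icc (0:ℝ) T, ‖η₁ t - η₂ t‖) ≤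
        (γ / (m - β - T * (L₁ * r₁ + α * s))) *
          ⨆ σ : Set.Icc (0:ℝ) T, |w₁ σ - w₂ σ|) := by
  
  have hmb : (0:ℝ) < m - β := by linarith
  haveI : Nonempty (Set.Icc (0:ℝ) T) := ⟨⟨0, Set.left_mem_Icc.mpr hT.le⟩⟩
  have hgcont : Continuous (fun σ : ℝ =>
      ‖η₁ (Set.projIcc 0 T hT.le σ) - η₂ (Set.projIcc 0 T hT.le σ)‖) :=
    ((η₁.continuous.comp continuous_projIcc).sub
      (η₂.continuous.comp continuous_projIcc)).norm
  have hbW : BddAbove (Set.range fun σ : Set.Icc (0:ℝ) T => |w₁ σ - w₂ σ|) :=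
    (isCompact_range ((w₁.continuous.sub w₂.continuous).abs)).bddAbove
  have hWle : ∀ t : Set.Icc (0:ℝ) T,
      |w₁ t - w₂ t| ≤ ⨆ σ : Set.Icc (0:ℝ) T, |w₁ σ - w₂ σ| := fun t => le_ciSup hbW t
  have hW0 : 0 ≤ ⨆ σ : Set.Icc (0:ℝ) T, |w₁ σ - w₂ σ| :=
    le_trans (abs_nonneg _) (hWle ⟨0, Set.left_mem_Icc.mpr hT.le⟩)
  have hInt0 : ∀ t : Set.Icc (0:ℝ) T, 0 ≤ ∫ σ in (0:ℝ)..(t:ℝ),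
      ‖η₁ (Set.projIcc 0 T hT.le σ) - η₂ (Set.projIcc 0 T hT.le σ)‖ := by
    intro t
    exact intervalIntegral.integral_nonneg t.2.1 (fun σ _ => norm_nonneg _)
  have key : ∀ t : Set.Icc (0:ℝ) T, (m - β) * ‖η₁ t - η₂ t‖ ≤
      (L₁ * r₁ + α * s) * (∫ σ in (0:ℝ)..(t:ℝ),
        ‖η₁ (Set.projIcc 0 T hT.le σ) - η₂ (Set.projIcc 0 T hT.le σ)‖) +
      γ * ⨆ σ : Set.Icc (0:ℝ) T, |w₁ σ - w₂ σ| := by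
    intro t
    have h1 := hvi₁ t (η₂ t) (hη₂ t)
    have h2 := hvi₂ t (η₁ t) (hη₁ t)
    have e1 : (inner ℝ (A (R η₁ ξ t) (η₁ t)) (η₂ t - η₁ t) : ℝ) =
        -(inner ℝ (A (R η₁ ξ t) (η₁ t)) (η₁ t - η₂ t) : ℝ) := by
      rw [show η₂ t - η₁ t = -(η₁ t - η₂ t) by abel, inner_neg_right]
    have e2 : (inner ℝ (f t) (η₂ t - η₁ t) : ℝ) =
        -(inner ℝ (f t) (η₁ t - η₂ t) : ℝ) := by
      rw [show η₂ t - η₁ t = -(η₁ t - η₂ t) by abel, inner_neg_right]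
    rw [e1, e2] at h1
    -- monotonicity of A
    have hmono := hA₃ (R η₂ ξ t) (η₁ t) (hη₁ t) (η₂ t) (hη₂ t)
    rw [inner_sub_left] at hmono
    -- Lipschitz in first argument
    have hlip : ‖A (R η₁ ξ t) (η₁ t) - A (R η₂ ξ t) (η₁ t)‖ ≤
        L₁ * ‖R η₁ ξ t - R η₂ ξ t‖ := hA₁ _ _ (η₁ t) (hη₁ t)
    have hip : -(‖A (R η₁ ξ t) (η₁ t) - A (R η₂ ξ t) (η₁ t)‖ * ‖η₁ t - η₂ t‖) ≤
        (inner ℝ (A (R η₁ ξ t) (η₁ t)) (η₁ t - η₂ t) : ℝ) -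
        (inner ℝ (A (R η₂ ξ t) (η₁ t)) (η₁ t - η₂ t) : ℝ) := by
      have h := real_inner_le_norm (A (R η₂ ξ t) (η₁ t) - A (R η₁ ξ t) (η₁ t)) (η₁ t - η₂ t)
      rw [inner_sub_left] at h
      rw [← norm_neg (A (R η₁ ξ t) (η₁ t) - A (R η₂ ξ t) (η₁ t)), neg_sub]
      linarith
    have hj := hjest (S η₁ t) (S η₂ t) (η₁ t) (η₂ t) (w₁ t) (w₂ t)
      (η₁ t) (hη₁ t) (η₂ t) (hη₂ t)
    have hRb := hR₁ η₁ η₂ ξ hη₁ hη₂ hξ t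
    have hSb := hS η₁ η₂ hη₁ hη₂ t
    have hwb := hWle t
    have hn : (0:ℝ) ≤ ‖η₁ t - η₂ t‖ := norm_nonneg _
    -- combine everything into (m-β)*‖e‖^2 ≤ C*‖e‖
    have hsq : (m - β) * ‖η₁ t - η₂ t‖ ^ 2 ≤
        ((L₁ * r₁ + α * s) * (∫ σ in (0:ℝ)..(t:ℝ),
          ‖η₁ (Set.projIcc 0 T hT.le σ) - η₂ (Set.projIcc 0 T hT.le σ)‖) +
          γ * ⨆ σ : Set.Icc (0:ℝ) T, |w₁ σ - w₂ σ|) * ‖η₁ t - η₂ t‖ := by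
      nlinarith [mul_le_mul_of_nonneg_right hlip hn,
        mul_le_mul_of_nonneg_right (hSb.trans (le_of_eq rfl)) (mul_nonneg hα.le hn),
        mul_le_mul_of_nonneg_right hRb (mul_nonneg hL₁.le hn),
        mul_le_mul_of_nonneg_right hwb (mul_nonneg hγ.le hn),
        mul_le_mul_of_nonneg_right hSb (mul_nonneg hα.le hn),
        sq_nonneg ‖η₁ t - η₂ t‖, hInt0 t, hW0]
    rcases eq_or_lt_of_le hn with h0 | h0
    · rw [← h0, mul_zero]
      have := hInt0 t
      positivity
    · have : (m - β) * ‖η₁ t - η₂ t‖ * ‖η₁ t - η₂ t‖ ≤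
          ((L₁ * r₁ + α * s) * (∫ σ in (0:ℝ)..(t:ℝ),
            ‖η₁ (Set.projIcc 0 T hT.le σ) - η₂ (Set.projIcc 0 T hT.le σ)‖) +
            γ * ⨆ σ : Set.Icc (0:ℝ) T, |w₁ σ - w₂ σ|) * ‖η₁ t - η₂ t‖ := by
        nlinarith [hsq]
      exact le_of_mul_le_mul_right this h0
  constructor
  · intro t
    have k := key t
    rw [div_mul_eq_mul_div, div_mul_eq_mul_div, ← add_div, le_div_iff₀ hmb]
    nlinarith [k]
  · intro hsmall
    have hc : (0:ℝ) < m - β - T * (L₁ * r₁ + α * s) := by linarith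
    have hbE : BddAbove (Set.range fun t : Set.Icc (0:ℝ) T => ‖η₁ t - η₂ t‖) :=
      (isCompact_range ((η₁.continuous.sub η₂.continuous).norm)).bddAbove
    have hMle : ∀ t : Set.Icc (0:ℝ) T,
        ‖η₁ t - η₂ t‖ ≤ ⨆ τ : Set.Icc (0:ℝ) T, ‖η₁ τ - η₂ τ‖ := fun t => le_ciSup hbE t
    have hM0 : 0 ≤ ⨆ τ : Set.Icc (0:ℝ) T, ‖η₁ τ - η₂ τ‖ :=
      le_trans (norm_nonneg _) (hMle ⟨0, Set.left_mem_Icc.mpr hT.le⟩)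
    have hInt : ∀ t : Set.Icc (0:ℝ) T, (∫ σ in (0:ℝ)..(t:ℝ),
        ‖η₁ (Set.projIcc 0 T hT.le σ) - η₂ (Set.projIcc 0 T hT.le σ)‖) ≤
        T * ⨆ τ : Set.Icc (0:ℝ) T, ‖η₁ τ - η₂ τ‖ := by
      intro t
      have h1 : (∫ σ in (0:ℝ)..(t:ℝ),
          ‖η₁ (Set.projIcc 0 T hT.le σ) - η₂ (Set.projIcc 0 T hT.le σ)‖) ≤
          ∫ _ in (0:ℝ)..(t:ℝ), (⨆ τ : Set.Icc (0:ℝ) T, ‖η₁ τ - η₂ τ‖) := by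
        apply intervalIntegral.integral_mono_on t.2.1
          (hgcont.intervalIntegrable _ _) (intervalIntegrable_const)
        intro σ _
        exact hMle _
      rw [intervalIntegral.integral_const, smul_eq_mul, sub_zero] at h1
      calc _ ≤ (t : ℝ) * ⨆ τ : Set.Icc (0:ℝ) T, ‖η₁ τ - η₂ τ‖ := h1
        _ ≤ T * ⨆ τ : Set.Icc (0:ℝ) T, ‖η₁ τ - η₂ τ‖ :=
            mul_le_mul_of_nonneg_right t.2.2 hM0
    have hLs : (0:ℝ) ≤ L₁ * r₁ + α * s := by positivity
    have key2 : ∀ t : Set.Icc (0:ℝ) T, (m - β) * ‖η₁ t - η₂ t‖ ≤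
        (L₁ * r₁ + α * s) * (T * ⨆ τ : Set.Icc (0:ℝ) T, ‖η₁ τ - η₂ τ‖) +
        γ * ⨆ σ : Set.Icc (0:ℝ) T, |w₁ σ - w₂ σ| := by
      intro t
      refine (key t).trans ?_
      have := mul_le_mul_of_nonneg_left (hInt t) hLs
      linarith
    rw [div_mul_eq_mul_div, le_div_iff₀ hc]
    have hsup : (⨆ t : Set.Icc (0:ℝ) T, ‖η₁ t - η₂ t‖) * (m - β) ≤
        (L₁ * r₁ + α * s) * (T * ⨆ τ : Set.Icc (0:ℝ) T, ‖η₁ τ - η₂ τ‖) +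
        γ * ⨆ σ : Set.Icc (0:ℝ) T, |w₁ σ - w₂ σ| := by
      rw [← le_div_iff₀ hmb]
      refine ciSup_le fun t => ?_
      rw [le_div_iff₀ hmb, mul_comm]
      exact key2 t
    linarith [hsup]
end

section
/- Let T > 0, I = [0,T], V a real Hilbert space, X, Z real Banach spaces, Y₁ a real Hilbert space, K_V ⊆ V nonempty closed convex, K_Y ⊆ Y₁ nonempty convex. Assume H(A) (constants L₁, L₂, m), H(j) (constants α, β, γ), H(R) (constants r₁, r₂), H(S) (constant s), with m > β, and fix f ∈ C(I; V). For i = 1, 2 let ξᵢ : I → Y₁ be continuous with values in K_Y, wᵢ : I → ℝ continuous, and let ηᵢ ∈ C(I; K_V) satisfy for all t ∈ I and all v ∈ K_V: ⟨A(R(ηᵢ, ξᵢ)(t), ηᵢ(t)), v − ηᵢ(t)⟩_V + j(Sηᵢ(t), ηᵢ(t), wᵢ(t), v) − j(Sηᵢ(t), ηᵢ(t), wᵢ(t), ηᵢ(t)) ≥ ⟨f(t), v − ηᵢ(t)⟩_V. Then for all t ∈ I: ‖η₁(t) − η₂(t)‖_V ≤ ((L₁r₁ + αs)/(m − β)) ∫₀ᵗ‖η₁(σ)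 − η₂(σ)‖_V dσ + (L₁r₂/(m − β)) ∫₀ᵗ‖ξ₁(σ) − ξ₂(σ)‖_{Y₁} dσ + (γ/(m − β)) |w₁(t) − w₂(t)|. -/
open scoped ContinuousMap

/-- The estimate from the proof of Theorem 3.3: if `ηᵢ` solves the
quasivariational inequality with data `(ξᵢ, wᵢ)` (`i = 1, 2`) and `m > β`, then
for all `t ∈ I`,
`‖η₁(t) − η₂(t)‖ ≤ ((L₁r₁ + αs)/(m − β)) ∫₀ᵗ‖η₁ − η₂‖ +
(L₁r₂/(m − β)) ∫₀ᵗ‖ξ₁ − ξ₂‖ + (γ/(m − β))|w₁(t) − w₂(t)|`. -/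
theorem stmt7
    {V : Type*} [NormedAddCommGroup V] [InnerProductSpace ℝ V] [CompleteSpace V]
    {X : Type*} [NormedAddCommGroup X] [NormedSpace ℝ X] [CompleteSpace X]
    {Z : Type*} [NormedAddCommGroup Z] [NormedSpace ℝ Z] [CompleteSpace Z]
    {Y₁ : Type*} [NormedAddCommGroup Y₁] [InnerProductSpace ℝ Y₁] [CompleteSpace Y₁]
    (T : ℝ) (hT : 0 < T)
    (KV : Set V) (hKVne : KV.Nonempty) (hKVcl : IsClosed KV) (hKVcv : Convex ℝ KV)
    (KY : Set Y₁) (hKYne : KY.Nonempty) (hKYcv : Convex ℝ KY)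
    -- H(A)
    (A : X → V → V) (L₁ L₂ m : ℝ) (hL₁ : 0 < L₁) (hL₂ : 0 < L₂) (hm : 0 < m)
    (hA₁ : ∀ (a₁ a₂ : X), ∀ b ∈ KV, ‖A a₁ b - A a₂ b‖ ≤ L₁ * ‖a₁ - a₂‖)
    (hA₂ : ∀ (a : X), ∀ b₁ ∈ KV, ∀ b₂ ∈ KV, ‖A a b₁ - A a b₂‖ ≤ L₂ * ‖b₁ - b₂‖)
    (hA₃ : ∀ (a : X), ∀ b₁ ∈ KV, ∀ b₂ ∈ KV,
      m * ‖b₁ - b₂‖ ^ 2 ≤ (inner ℝ (A a b₁ - A a b₂) (b₁ - b₂) : ℝ))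
    -- H(j)
    (j : Z → V → ℝ → V → ℝ) (α β γ : ℝ) (hα : 0 < α) (hβ : 0 < β) (hγ : 0 < γ)
    (hjcv : ∀ (a : Z) (b : V) (c : ℝ), ConvexOn ℝ KV (j a b c))
    (hjlsc : ∀ (a : Z) (b : V) (c : ℝ), LowerSemicontinuousOn (j a b c) KV)
    (hjest : ∀ (a₁ a₂ : Z) (b₁ b₂ : V) (c₁ c₂ : ℝ), ∀ d₁ ∈ KV, ∀ d₂ ∈ KV,
      j a₁ b₁ c₁ d₂ - j a₁ b₁ c₁ d₁ + j a₂ b₂ c₂ d₁ - j a₂ b₂ c₂ d₂ ≤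
        α * ‖a₁ - a₂‖ * ‖d₁ - d₂‖ + β * ‖b₁ - b₂‖ * ‖d₁ - d₂‖ +
          γ * |c₁ - c₂| * ‖d₁ - d₂‖)
    -- H(R)
    (R : C(Set.Icc (0:ℝ) T, V) → C(Set.Icc (0:ℝ) T, Y₁) → C(Set.Icc (0:ℝ) T, X))
    (r₁ r₂ : ℝ) (hr₁ : 0 < r₁) (hr₂ : 0 < r₂)
    (hR₁ : ∀ (a₁ a₂ : C(Set.Icc (0:ℝ) T, V)) (b : C(Set.Icc (0:ℝ) T, Y₁)),
      (∀ t, a₁ t ∈ KV) → (∀ t, a₂ t ∈ KV) → (∀ t, b t ∈ KY) →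
      ∀ t : Set.Icc (0:ℝ) T, ‖R a₁ b t - R a₂ b t‖ ≤
        r₁ * ∫ σ in (0:ℝ)..(t:ℝ),
          ‖a₁ (Set.projIcc 0 T hT.le σ) - a₂ (Set.projIcc 0 T hT.le σ)‖)
    (hR₂ : ∀ (a : C(Set.Icc (0:ℝ) T, V)) (b₁ b₂ : C(Set.Icc (0:ℝ) T, Y₁)),
      (∀ t, a t ∈ KV) → (∀ t, b₁ t ∈ KY) → (∀ t, b₂ t ∈ KY) →
      ∀ t : Set.Icc (0:ℝ) T, ‖R a b₁ t - R a b₂ t‖ ≤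
        r₂ * ∫ σ in (0:ℝ)..(t:ℝ),
          ‖b₁ (Set.projIcc 0 T hT.le σ) - b₂ (Set.projIcc 0 T hT.le σ)‖)
    -- H(S)
    (S : C(Set.Icc (0:ℝ) T, V) → C(Set.Icc (0:ℝ) T, Z)) (s : ℝ) (hs : 0 < s)
    (hS : ∀ (a₁ a₂ : C(Set.Icc (0:ℝ) T, V)),
      (∀ t, a₁ t ∈ KV) → (∀ t, a₂ t ∈ KV) →
      ∀ t : Set.Icc (0:ℝ) T, ‖S a₁ t - S a₂ t‖ ≤
        s * ∫ σ in (0:ℝ)..(t:ℝ),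
          ‖a₁ (Set.projIcc 0 T hT.le σ) - a₂ (Set.projIcc 0 T hT.le σ)‖)
    -- smallness condition
    (hmβ : β < m)
    -- fixed data
    (f : C(Set.Icc (0:ℝ) T, V))
    -- the two data sets and corresponding solutions
    (ξ₁ ξ₂ : C(Set.Icc (0:ℝ) T, Y₁)) (hξ₁ : ∀ t, ξ₁ t ∈ KY) (hξ₂ : ∀ t, ξ₂ t ∈ KY)
    (w₁ w₂ : C(Set.Icc (0:ℝ) T, ℝ))
    (η₁ η₂ : C(Set.Icc (0:ℝ) T, V))
    (hη₁ : ∀ t, η₁ t ∈ KV) (hη₂ : ∀ t, η₂ t ∈ KV)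
    (hvi₁ : ∀ t : Set.Icc (0:ℝ) T, ∀ v ∈ KV,
      (inner ℝ (A (R η₁ ξ₁ t) (η₁ t)) (v - η₁ t) : ℝ) +
          j (S η₁ t) (η₁ t) (w₁ t) v - j (S η₁ t) (η₁ t) (w₁ t) (η₁ t) ≥
        (inner ℝ (f t) (v - η₁ t) : ℝ))
    (hvi₂ : ∀ t : Set.Icc (0:ℝ) T, ∀ v ∈ KV,
      (inner ℝ (A (R η₂ ξ₂ t) (η₂ t)) (v - η₂ t) : ℝ) +
          j (S η₂ t) (η₂ t) (w₂ t) v - j (S η₂ t) (η₂ t) (w₂ t) (η₂ t) ≥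
        (inner ℝ (f t) (v - η₂ t) : ℝ)) :
    ∀ t : Set.Icc (0:ℝ) T,
      ‖η₁ t - η₂ t‖ ≤
        ((L₁ * r₁ + α * s) / (m - β)) * (∫ σ in (0:ℝ)..(t:ℝ),
            ‖η₁ (Set.projIcc 0 T hT.le σ) - η₂ (Set.projIcc 0 T hT.le σ)‖) +
          (L₁ * r₂ / (m - β)) * (∫ σ in (0:ℝ)..(t:ℝ),
            ‖ξ₁ (Set.projIcc 0 T hT.le σ) - ξ₂ (Set.projIcc 0 T hT.le σ)‖) +
          (γ / (m - β)) * |w₁ t - w₂ t| := by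
  intro t
  set Iη := ∫ σ in (0:ℝ)..(t:ℝ),
      ‖η₁ (Set.projIcc 0 T hT.le σ) - η₂ (Set.projIcc 0 T hT.le σ)‖ with hIη
  set Iξ := ∫ σ in (0:ℝ)..(t:ℝ),
      ‖ξ₁ (Set.projIcc 0 T hT.le σ) - ξ₂ (Set.projIcc 0 T hT.le σ)‖ with hIξ
  have hIηnn : 0 ≤ Iη :=
    intervalIntegral.integral_nonneg t.2.1 (fun u _ => norm_nonneg _)
  have hIξnn : 0 ≤ Iξ :=
    intervalIntegral.integral_nonneg t.2.1 (fun u _ => norm_nonneg _)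
  have hmβ' : (0:ℝ) < m - β := by linarith
  have key : (m - β) * ‖η₁ t - η₂ t‖ ≤
      (L₁ * r₁ + α * s) * Iη + L₁ * r₂ * Iξ + γ * |w₁ t - w₂ t| := by
    rcases eq_or_lt_of_le (norm_nonneg (η₁ t - η₂ t)) with h0 | hpos
    · rw [← h0, mul_zero]
      have h1 : 0 ≤ (L₁ * r₁ + α * s) * Iη := mul_nonneg (by positivity) hIηnn
      have h2 : 0 ≤ L₁ * r₂ * Iξ := mul_nonneg (by positivity) hIξnn
      have h3 : 0 ≤ γ * |w₁ t - w₂ t| := mul_nonneg hγ.le (abs_nonneg _)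
      linarith
    · have h1 := hvi₁ t (η₂ t) (hη₂ t)
      have h2 := hvi₂ t (η₁ t) (hη₁ t)
      have hmono := hA₃ (R η₁ ξ₁ t) (η₁ t) (hη₁ t) (η₂ t) (hη₂ t)
      have hjE := hjest (S η₁ t) (S η₂ t) (η₁ t) (η₂ t) (w₁ t) (w₂ t)
        (η₁ t) (hη₁ t) (η₂ t) (hη₂ t)
      have hAlip := hA₁ (R η₁ ξ₁ t) (R η₂ ξ₂ t) (η₂ t) (hη₂ t)
      have hSest := hS η₁ η₂ hη₁ hη₂ t
      have hR1 := hR₁ η₁ η₂ ξ₁ hη₁ hη₂ hξ₁ t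
      have hR2 := hR₂ η₂ ξ₁ ξ₂ hη₂ hξ₁ hξ₂ t
      have hRtri : ‖R η₁ ξ₁ t - R η₂ ξ₂ t‖ ≤ r₁ * Iη + r₂ * Iξ := by
        calc ‖R η₁ ξ₁ t - R η₂ ξ₂ t‖
            ≤ ‖R η₁ ξ₁ t - R η₂ ξ₁ t‖ + ‖R η₂ ξ₁ t - R η₂ ξ₂ t‖ :=
              norm_sub_le_norm_sub_add_norm_sub _ _ _
          _ ≤ r₁ * Iη + r₂ * Iξ := add_le_add hR1 hR2
      have hsub : η₂ t - η₁ t = -(η₁ t - η₂ t) := by abel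
      rw [hsub, inner_neg_right, inner_neg_right] at h1
      rw [inner_sub_left] at hmono
      have hbc : (inner ℝ (A (R η₂ ξ₂ t) (η₂ t) - A (R η₁ ξ₁ t) (η₂ t))
          (η₁ t - η₂ t) : ℝ) ≤
          ‖A (R η₂ ξ₂ t) (η₂ t) - A (R η₁ ξ₁ t) (η₂ t)‖ * ‖η₁ t - η₂ t‖ :=
        real_inner_le_norm _ _
      have hbcsplit : (inner ℝ (A (R η₂ ξ₂ t) (η₂ t) - A (R η₁ ξ₁ t) (η₂ t))
          (η₁ t - η₂ t) : ℝ) =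
          (inner ℝ (A (R η₂ ξ₂ t) (η₂ t)) (η₁ t - η₂ t) : ℝ) -
          (inner ℝ (A (R η₁ ξ₁ t) (η₂ t)) (η₁ t - η₂ t) : ℝ) := inner_sub_left _ _ _
      have hnormrev : ‖A (R η₂ ξ₂ t) (η₂ t) - A (R η₁ ξ₁ t) (η₂ t)‖ =
          ‖A (R η₁ ξ₁ t) (η₂ t) - A (R η₂ ξ₂ t) (η₂ t)‖ := norm_sub_rev _ _
      rw [hnormrev] at hbc
      have hsq : ‖η₁ t - η₂ t‖ ^ 2 = ‖η₁ t - η₂ t‖ * ‖η₁ t - η₂ t‖ := sq _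
      rw [hsq] at hmono
      -- products bounds
      have m1 : α * ‖S η₁ t - S η₂ t‖ * ‖η₁ t - η₂ t‖ ≤
          α * (s * Iη) * ‖η₁ t - η₂ t‖ :=
        mul_le_mul_of_nonneg_right
          (mul_le_mul_of_nonneg_left hSest hα.le) (norm_nonneg _)
      have m2 : ‖A (R η₁ ξ₁ t) (η₂ t) - A (R η₂ ξ₂ t) (η₂ t)‖ * ‖η₁ t - η₂ t‖ ≤
          L₁ * (r₁ * Iη + r₂ * Iξ) * ‖η₁ t - η₂ t‖ := by
        refine mul_le_mul_of_nonneg_right ?_ (norm_nonneg _)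
        calc ‖A (R η₁ ξ₁ t) (η₂ t) - A (R η₂ ξ₂ t) (η₂ t)‖
            ≤ L₁ * ‖R η₁ ξ₁ t - R η₂ ξ₂ t‖ := hAlip
          _ ≤ L₁ * (r₁ * Iη + r₂ * Iξ) :=
              mul_le_mul_of_nonneg_left hRtri hL₁.le
      rw [← mul_le_mul_iff_of_pos_right hpos]
      nlinarith [hmono, h1, h2, hbc, hbcsplit, hjE, m1, m2]
  -- conclude
  have hgoal : ((L₁ * r₁ + α * s) / (m - β)) * Iη + (L₁ * r₂ / (m - β)) * Iξ +
      (γ / (m - β)) * |w₁ t - w₂ t| =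
      ((L₁ * r₁ + α * s) * Iη + L₁ * r₂ * Iξ + γ * |w₁ t - w₂ t|) / (m - β) := by
    ring
  rw [hgoal, le_div_iff₀ hmβ']
  linarith [key]
end

section
/- Let (Γ, μ) be a finite measure space, d ≥ 1, V a real Hilbert space, ρ : V → L²(Γ; ℝᵈ) a bounded linear operator with operator norm ‖ρ‖, and ν : Γ → ℝᵈ a measurable field with ‖ν(x)‖ = 1 for a.e. x. For v ∈ V write v_ν(x) = ρv(x)·ν(x) and v_τ(x) = ρv(x) − v_ν(x)ν(x). Let g ∈ L²(Γ) with g ≥ 0 a.e., let p : ℝ → ℝ be Lipschitz with constant L_p > 0 and satisfy 0 ≤ p(r) ≤ p* for all r ∈ ℝ, and let μ̂ : [0,∞) × ℝ → ℝ satisfy 0 ≤ μ̂(b, c) ≤ μ* and |μ̂(b₁, c₁) − μ̂(b₂, c₂)| ≤ L_μ(|b₁ − b₂| + |c₁ − c₂|) for all arguments. Define j : L²(Γ) × V × ℝ × V → ℝ by j(z, u, w, v) = ∫_Γ p(z(x) − g(x)) v_ν(x) dμ(x) + ∫_Γ μ̂(‖u_τ(x)‖, w) p(z(x) − g(x)) ‖v_τ(x)‖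 dμ(x). Then for all z₁, z₂ ∈ L²(Γ), u₁, u₂, d₁, d₂ ∈ V and w₁, w₂ ∈ ℝ: j(z₁,u₁,w₁,d₂) − j(z₁,u₁,w₁,d₁) + j(z₂,u₂,w₂,d₁) − j(z₂,u₂,w₂,d₂) ≤ L_p‖ρ‖(1 + μ*)‖z₁ − z₂‖_{L²(Γ)}‖d₁ − d₂‖_V + L_μ p*‖ρ‖²‖u₁ − u₂‖_V‖d₁ − d₂‖_V + L_μ p*‖ρ‖ μ(Γ)^{1/2} |w₁ − w₂| ‖d₁ − d₂‖_V. -/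
open MeasureTheory
open scoped ENNReal NNReal

lemma csBound {α : Type*} [MeasurableSpace α] {μ : Measure α}
    {E F : Type*} [NormedAddCommGroup E] [NormedAddCommGroup F]
    {f : α → E} {g : α → F} (hf : MemLp f 2 μ) (hg : MemLp g 2 μ) :
    ∫ x, ‖f x‖ * ‖g x‖ ∂μ ≤ (eLpNorm f 2 μ).toReal * (eLpNorm g 2 μ).toReal := by
  have h2 : ENNReal.ofReal (2:ℝ) = 2 := by norm_num [ENNReal.ofReal]
  have hf' : MemLp (fun x => ‖f x‖) (ENNReal.ofReal 2) μ := by rw [h2]; exact hf.norm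
  have hg' : MemLp (fun x => ‖g x‖) (ENNReal.ofReal 2) μ := by rw [h2]; exact hg.norm
  have hcs := integral_mul_norm_le_Lp_mul_Lq (μ := μ)
    Real.HolderConjugate.two_two hf' hg'
  simp only [norm_norm] at hcs
  refine hcs.trans_eq ?_
  rw [hf.eLpNorm_eq_integral_rpow_norm two_ne_zero ENNReal.ofNat_ne_top,
      hg.eLpNorm_eq_integral_rpow_norm two_ne_zero ENNReal.ofNat_ne_top,
      ENNReal.toReal_ofReal (by positivity), ENNReal.toReal_ofReal (by positivity)]
  norm_num

lemma csIntegrable {α : Type*} [MeasurableSpace α] {μ : Measure α}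
    {E F : Type*} [NormedAddCommGroup E] [NormedAddCommGroup F]
    {f : α → E} {g : α → F} (hf : MemLp f 2 μ) (hg : MemLp g 2 μ) :
    Integrable (fun x => ‖f x‖ * ‖g x‖) μ := by
  have := (MemLp.smul (φ := fun x => ‖f x‖) (f := fun x => ‖g x‖)
    hg.norm hf.norm (p := 2) (q := 2) (r := 1)
    (hpqr := ⟨by norm_num [ENNReal.inv_two_add_inv_two]⟩))
  simpa [memLp_one_iff_integrable, Pi.smul_apply', smul_eq_mul, Pi.mul_def] using this

lemma projBound {E : Type*} [NormedAddCommGroup E] [InnerProductSpace ℝ E]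
    (w ν : E) (h : ‖ν‖ = 1) : ‖w - (inner ℝ w ν : ℝ) • ν‖ ≤ ‖w‖ := by
  have h2 : ‖w - (inner ℝ w ν : ℝ) • ν‖ ^ 2 ≤ ‖w‖ ^ 2 := by
    rw [norm_sub_sq_real, real_inner_smul_right, norm_smul, mul_pow]
    simp only [Real.norm_eq_abs, sq_abs, h]
    nlinarith [sq_nonneg (inner ℝ w ν : ℝ)]
  calc ‖w - (inner ℝ w ν : ℝ) • ν‖ = Real.sqrt (‖w - (inner ℝ w ν : ℝ) • ν‖ ^ 2) := by
        rw [Real.sqrt_sq (norm_nonneg _)]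
    _ ≤ Real.sqrt (‖w‖ ^ 2) := Real.sqrt_le_sqrt h2
    _ = ‖w‖ := Real.sqrt_sq (norm_nonneg _)

lemma tangSub {E : Type*} [NormedAddCommGroup E] [InnerProductSpace ℝ E]
    (a b ν : E) :
    (a - (inner ℝ a ν : ℝ) • ν) - (b - (inner ℝ b ν : ℝ) • ν)
      = (a - b) - (inner ℝ (a - b) ν : ℝ) • ν := by
  rw [inner_sub_left, sub_smul]; abel

lemma integralCombine {α : Type*} [MeasurableSpace α] {μ : Measure α}
    {a1 a2 a3 a4 b1 b2 b3 b4 : α → ℝ}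
    (h1 : Integrable a1 μ) (h2 : Integrable a2 μ) (h3 : Integrable a3 μ)
    (h4 : Integrable a4 μ) (h5 : Integrable b1 μ) (h6 : Integrable b2 μ)
    (h7 : Integrable b3 μ) (h8 : Integrable b4 μ) :
    (∫ x, a1 x ∂μ) + (∫ x, b1 x ∂μ) - ((∫ x, a2 x ∂μ) + ∫ x, b2 x ∂μ)
      + ((∫ x, a3 x ∂μ) + ∫ x, b3 x ∂μ) - ((∫ x, a4 x ∂μ) + ∫ x, b4 x ∂μ)
    = ∫ x, (a1 x - a2 x + a3 x - a4 x) + (b1 x - b2 x + b3 x - b4 x) ∂μ := by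
  have e12 : Integrable (fun x => a1 x - a2 x) μ := h1.sub h2
  have e123 : Integrable (fun x => a1 x - a2 x + a3 x) μ := e12.add h3
  have eA : Integrable (fun x => a1 x - a2 x + a3 x - a4 x) μ := e123.sub h4
  have f12 : Integrable (fun x => b1 x - b2 x) μ := h5.sub h6
  have f123 : Integrable (fun x => b1 x - b2 x + b3 x) μ := f12.add h7
  have fB : Integrable (fun x => b1 x - b2 x + b3 x - b4 x) μ := f123.sub h8
  rw [integral_add eA fB, integral_sub e123 h4, integral_add e12 h3,
      integral_sub h1 h2, integral_sub f123 h8, integral_add f12 h7,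
      integral_sub h5 h6]
  ring

lemma pointwiseEst {E : Type*} [NormedAddCommGroup E] [InnerProductSpace ℝ E]
    (p : ℝ → ℝ) (μf : ℝ → ℝ → ℝ) (Lp' pstar Lμ μstar : ℝ)
    (hLp' : 0 ≤ Lp') (hμstar : 0 ≤ μstar) (hpstar : 0 ≤ pstar) (hLμ : 0 ≤ Lμ)
    (hplip : ∀ r₁ r₂, |p r₁ - p r₂| ≤ Lp' * |r₁ - r₂|)
    (hpbd : ∀ r, 0 ≤ p r ∧ p r ≤ pstar)
    (hμbd : ∀ b c, 0 ≤ b → 0 ≤ μf b c ∧ μf b c ≤ μstar)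
    (hμlip : ∀ b₁ b₂ c₁ c₂, 0 ≤ b₁ → 0 ≤ b₂ →
      |μf b₁ c₁ - μf b₂ c₂| ≤ Lμ * (|b₁ - b₂| + |c₁ - c₂|))
    (n : E) (hn : ‖n‖ = 1)
    (A1 A2 B1 B2 : E) (r₁ r₂ gx w₁ w₂ : ℝ) :
    p (r₁ - gx) * (inner ℝ A2 n : ℝ) - p (r₁ - gx) * (inner ℝ A1 n : ℝ)
      + p (r₂ - gx) * (inner ℝ A1 n : ℝ) - p (r₂ - gx) * (inner ℝ A2 n : ℝ)
      + (μf ‖B1 - (inner ℝ B1 n : ℝ) • n‖ w₁ * p (r₁ - gx) * ‖A2 - (inner ℝ A2 n : ℝ) • n‖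
         - μf ‖B1 - (inner ℝ B1 n : ℝ) • n‖ w₁ * p (r₁ - gx) * ‖A1 - (inner ℝ A1 n : ℝ) • n‖
         + μf ‖B2 - (inner ℝ B2 n : ℝ) • n‖ w₂ * p (r₂ - gx) * ‖A1 - (inner ℝ A1 n : ℝ) • n‖
         - μf ‖B2 - (inner ℝ B2 n : ℝ) • n‖ w₂ * p (r₂ - gx) * ‖A2 - (inner ℝ A2 n : ℝ) • n‖)
      ≤ Lp' * (1 + μstar) * (‖r₁ - r₂‖ * ‖A1 - A2‖)
        + Lμ * pstar * (‖B1 - B2‖ * ‖A1 - A2‖)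
        + Lμ * pstar * |w₁ - w₂| * ‖A1 - A2‖ := by
  set P1 := p (r₁ - gx) with hP1
  set P2 := p (r₂ - gx) with hP2
  set N1 := (inner ℝ A1 n : ℝ) with hN1
  set N2 := (inner ℝ A2 n : ℝ) with hN2
  set T1 := A1 - N1 • n with hT1
  set T2 := A2 - N2 • n with hT2
  set S1 := B1 - (inner ℝ B1 n : ℝ) • n with hS1
  set S2 := B2 - (inner ℝ B2 n : ℝ) • n with hS2
  set M1 := μf ‖S1‖ w₁ with hM1
  set M2 := μf ‖S2‖ w₂ with hM2
  -- basic bounds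
  have hP : |P1 - P2| ≤ Lp' * ‖r₁ - r₂‖ := by
    have h := hplip (r₁ - gx) (r₂ - gx)
    simpa [Real.norm_eq_abs, sub_sub_sub_cancel_right] using h
  have hN : |N2 - N1| ≤ ‖A1 - A2‖ := by
    rw [hN1, hN2, ← inner_sub_left]
    calc |(inner ℝ (A2 - A1) n : ℝ)| ≤ ‖A2 - A1‖ * ‖n‖ := abs_real_inner_le_norm _ _
      _ = ‖A1 - A2‖ := by rw [hn, mul_one, norm_sub_rev]
  have hT : |‖T2‖ - ‖T1‖| ≤ ‖A1 - A2‖ := by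
    calc |‖T2‖ - ‖T1‖| ≤ ‖T2 - T1‖ := abs_norm_sub_norm_le _ _
      _ = ‖(A2 - A1) - (inner ℝ (A2 - A1) n : ℝ) • n‖ := by rw [hT1, hT2, tangSub]
      _ ≤ ‖A2 - A1‖ := projBound _ _ hn
      _ = ‖A1 - A2‖ := norm_sub_rev _ _
  have hS : |‖S1‖ - ‖S2‖| ≤ ‖B1 - B2‖ := by
    calc |‖S1‖ - ‖S2‖| ≤ ‖S1 - S2‖ := abs_norm_sub_norm_le _ _
      _ = ‖(B1 - B2) - (inner ℝ (B1 - B2) n : ℝ) • n‖ := by rw [hS1, hS2, tangSub]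
      _ ≤ ‖B1 - B2‖ := projBound _ _ hn
  have hM : |M1 - M2| ≤ Lμ * (‖B1 - B2‖ + |w₁ - w₂|) := by
    refine (hμlip _ _ _ _ (norm_nonneg _) (norm_nonneg _)).trans ?_
    have := add_le_add_left hS |w₁ - w₂|
    exact mul_le_mul_of_nonneg_left this hLμ
  have hM1bd := hμbd ‖S1‖ w₁ (norm_nonneg _)
  have hP1bd := hpbd (r₁ - gx)
  have hP2bd := hpbd (r₂ - gx)
  have hM1abs : |M1| ≤ μstar := by rw [abs_of_nonneg hM1bd.1]; exact hM1bd.2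
  have hP2abs : |P2| ≤ pstar := by rw [abs_of_nonneg hP2bd.1]; exact hP2bd.2
  have key1 : (P1 - P2) * (N2 - N1) ≤ Lp' * ‖r₁ - r₂‖ * ‖A1 - A2‖ :=
    calc (P1 - P2) * (N2 - N1) ≤ |(P1 - P2) * (N2 - N1)| := le_abs_self _
      _ = |P1 - P2| * |N2 - N1| := abs_mul _ _
      _ ≤ Lp' * ‖r₁ - r₂‖ * ‖A1 - A2‖ :=
          mul_le_mul hP hN (abs_nonneg _) (by positivity)
  have keyM : |M1 * P1 - M2 * P2| ≤
      μstar * (Lp' * ‖r₁ - r₂‖) + Lμ * (‖B1 - B2‖ + |w₁ - w₂|) * pstar := by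
    calc |M1 * P1 - M2 * P2| = |M1 * (P1 - P2) + (M1 - M2) * P2| := by ring_nf
      _ ≤ |M1 * (P1 - P2)| + |(M1 - M2) * P2| := abs_add_le _ _
      _ = |M1| * |P1 - P2| + |M1 - M2| * |P2| := by rw [abs_mul, abs_mul]
      _ ≤ μstar * (Lp' * ‖r₁ - r₂‖) + Lμ * (‖B1 - B2‖ + |w₁ - w₂|) * pstar :=
          add_le_add (mul_le_mul hM1abs hP (abs_nonneg _) hμstar)
            (mul_le_mul hM hP2abs (abs_nonneg _)
              (mul_nonneg hLμ (by positivity)))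
  have key2 : (M1 * P1 - M2 * P2) * (‖T2‖ - ‖T1‖) ≤
      (μstar * (Lp' * ‖r₁ - r₂‖) + Lμ * (‖B1 - B2‖ + |w₁ - w₂|) * pstar) * ‖A1 - A2‖ :=
    calc (M1 * P1 - M2 * P2) * (‖T2‖ - ‖T1‖)
        ≤ |(M1 * P1 - M2 * P2) * (‖T2‖ - ‖T1‖)| := le_abs_self _
      _ = |M1 * P1 - M2 * P2| * |‖T2‖ - ‖T1‖| := abs_mul _ _
      _ ≤ _ := mul_le_mul keyM hT (abs_nonneg _)
          (add_nonneg (mul_nonneg hμstar (by positivity))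
            (mul_nonneg (mul_nonneg hLμ (by positivity)) hpstar))
  calc P1 * N2 - P1 * N1 + P2 * N1 - P2 * N2
        + (M1 * P1 * ‖T2‖ - M1 * P1 * ‖T1‖ + M2 * P2 * ‖T1‖ - M2 * P2 * ‖T2‖)
      = (P1 - P2) * (N2 - N1) + (M1 * P1 - M2 * P2) * (‖T2‖ - ‖T1‖) := by ring
    _ ≤ Lp' * ‖r₁ - r₂‖ * ‖A1 - A2‖
        + (μstar * (Lp' * ‖r₁ - r₂‖) + Lμ * (‖B1 - B2‖ + |w₁ - w₂|) * pstar) * ‖A1 - A2‖ :=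
        add_le_add key1 key2
    _ = Lp' * (1 + μstar) * (‖r₁ - r₂‖ * ‖A1 - A2‖)
        + Lμ * pstar * (‖B1 - B2‖ * ‖A1 - A2‖)
        + Lμ * pstar * |w₁ - w₂| * ‖A1 - A2‖ := by ring

/-- The estimate H(j)(b) for the friction functional
`j(z, u, w, v) = ∫_Γ p(z − g) v_ν dμ + ∫_Γ μ̂(‖u_τ‖, w) p(z − g) ‖v_τ‖ dμ`
of the wear contact problem, where `v_ν = ρv·ν`, `v_τ = ρv − v_ν ν`,
`p` is the normal compliance function (Lipschitz `L_p`, `0 ≤ p ≤ p*`),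
`μ̂` is the friction coefficient (`0 ≤ μ̂ ≤ μ*`, Lipschitz `L_μ`),
`g ≥ 0` is the gap and `ρ` the trace operator. -/
theorem stmt12 {Γ : Type*} [MeasurableSpace Γ] (μ : Measure Γ) [IsFiniteMeasure μ]
    (d : ℕ) (hd : 1 ≤ d)
    {V : Type*} [NormedAddCommGroup V] [InnerProductSpace ℝ V]
    (ρ : V →L[ℝ] Lp (EuclideanSpace ℝ (Fin d)) 2 μ)
    (ν : Γ → EuclideanSpace ℝ (Fin d)) (hν : Measurable ν)
    (hν1 : ∀ᵐ x ∂μ, ‖ν x‖ = 1)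
    (g : Lp ℝ 2 μ) (hg : ∀ᵐ x ∂μ, 0 ≤ g x)
    (p : ℝ → ℝ) (Lp' pstar : ℝ) (hLp' : 0 < Lp')
    (hplip : ∀ r₁ r₂ : ℝ, |p r₁ - p r₂| ≤ Lp' * |r₁ - r₂|)
    (hpbd : ∀ r : ℝ, 0 ≤ p r ∧ p r ≤ pstar)
    (μf : ℝ → ℝ → ℝ) (Lμ μstar : ℝ)
    (hμbd : ∀ b c : ℝ, 0 ≤ b → 0 ≤ μf b c ∧ μf b c ≤ μstar)
    (hμlip : ∀ b₁ b₂ c₁ c₂ : ℝ, 0 ≤ b₁ → 0 ≤ b₂ →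
      |μf b₁ c₁ - μf b₂ c₂| ≤ Lμ * (|b₁ - b₂| + |c₁ - c₂|))
    (j : Lp ℝ 2 μ → V → ℝ → V → ℝ)
    (hj : ∀ (z : Lp ℝ 2 μ) (u : V) (w : ℝ) (v : V),
      j z u w v =
        (∫ x, p (z x - g x) * (inner ℝ (ρ v x) (ν x) : ℝ) ∂μ) +
        ∫ x, μf (‖ρ u x - (inner ℝ (ρ u x) (ν x) : ℝ) • ν x‖) w *
              p (z x - g x) *
              ‖ρ v x - (inner ℝ (ρ v x) (ν x) : ℝ) • ν x‖ ∂μ) :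
    ∀ (z₁ z₂ : Lp ℝ 2 μ) (u₁ u₂ d₁ d₂ : V) (w₁ w₂ : ℝ),
      j z₁ u₁ w₁ d₂ - j z₁ u₁ w₁ d₁ + j z₂ u₂ w₂ d₁ - j z₂ u₂ w₂ d₂ ≤
        Lp' * ‖ρ‖ * (1 + μstar) * ‖z₁ - z₂‖ * ‖d₁ - d₂‖ +
        Lμ * pstar * ‖ρ‖ ^ 2 * ‖u₁ - u₂‖ * ‖d₁ - d₂‖ +
        Lμ * pstar * ‖ρ‖ * Real.sqrt (μ Set.univ).toReal * |w₁ - w₂| * ‖d₁ - d₂‖ := by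
  intro z₁ z₂ u₁ u₂ d₁ d₂ w₁ w₂
  have hpstar : 0 ≤ pstar := le_trans (hpbd 0).1 (hpbd 0).2
  have hμstar : 0 ≤ μstar := le_trans (hμbd 0 0 le_rfl).1 (hμbd 0 0 le_rfl).2
  have hLμ : 0 ≤ Lμ := by
    have h := hμlip 1 0 0 0 zero_le_one le_rfl
    have h0 : (0:ℝ) ≤ Lμ * (|1 - 0| + |0 - 0|) := le_trans (abs_nonneg _) h
    simpa using h0
  -- continuity of p
  have hpcont : Continuous p := by
    have : LipschitzWith (Real.toNNReal Lp') p := by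
      apply LipschitzWith.of_dist_le_mul
      intro a b
      rw [Real.dist_eq, Real.dist_eq, Real.coe_toNNReal _ hLp'.le]
      exact hplip a b
    exact this.continuous
  have hμcont : ∀ w : ℝ, Continuous (fun b : ℝ => μf |b| w) := by
    intro w
    have : LipschitzWith (Real.toNNReal Lμ) (fun b : ℝ => μf |b| w) := by
      apply LipschitzWith.of_dist_le_mul
      intro a b
      rw [Real.dist_eq, Real.dist_eq, Real.coe_toNNReal _ hLμ]
      calc |μf |a| w - μf |b| w| ≤ Lμ * (|(|a| - |b|)| + |w - w|) :=
            hμlip _ _ _ _ (abs_nonneg a) (abs_nonneg b)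
        _ ≤ Lμ * |a - b| := by
            rw [sub_self, abs_zero, add_zero]
            exact mul_le_mul_of_nonneg_left (abs_abs_sub_abs_le_abs_sub a b) hLμ
    exact this.continuous
  have hν_m : AEStronglyMeasurable ν μ := hν.aestronglyMeasurable
  -- measurability pieces
  have hPm : ∀ z : Lp ℝ 2 μ, AEStronglyMeasurable (fun x => p (z x - g x)) μ := fun z =>
    hpcont.comp_aestronglyMeasurable ((Lp.aestronglyMeasurable z).sub (Lp.aestronglyMeasurable g))
  have hNm : ∀ v : V, AEStronglyMeasurable (fun x => (inner ℝ (ρ v x) (ν x) : ℝ)) μ := fun v =>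
    (Lp.aestronglyMeasurable (ρ v)).inner hν_m
  have hTm : ∀ v : V, AEStronglyMeasurable
      (fun x => ρ v x - (inner ℝ (ρ v x) (ν x) : ℝ) • ν x) μ := fun v =>
    (Lp.aestronglyMeasurable (ρ v)).sub ((hNm v).smul hν_m)
  have hMm : ∀ (u : V) (w : ℝ), AEStronglyMeasurable
      (fun x => μf (‖ρ u x - (inner ℝ (ρ u x) (ν x) : ℝ) • ν x‖) w) μ := by
    intro u w
    have he : (fun x => μf (‖ρ u x - (inner ℝ (ρ u x) (ν x) : ℝ) • ν x‖) w)
        = fun x => (fun b : ℝ => μf |b| w) (‖ρ u x - (inner ℝ (ρ u x) (ν x) : ℝ) • ν x‖) := by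
      funext x; simp [abs_of_nonneg (norm_nonneg _)]
    rw [he]
    exact (hμcont w).comp_aestronglyMeasurable (hTm u).norm
  have hRint : ∀ v : V, Integrable (fun x => ρ v x) μ :=
    fun v => (Lp.memLp (ρ v)).integrable one_le_two
  -- integrability of the first-kind integrands
  have hInt_a : ∀ (z : Lp ℝ 2 μ) (v : V),
      Integrable (fun x => p (z x - g x) * (inner ℝ (ρ v x) (ν x) : ℝ)) μ := by
    intro z v
    refine Integrable.mono' (((hRint v).norm).const_mul pstar)
      ((hPm z).mul (hNm v)) ?_
    filter_upwards [hν1] with x hx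
    rw [Real.norm_eq_abs, abs_mul]
    have h1 : |p (z x - g x)| ≤ pstar := by
      rw [abs_of_nonneg (hpbd _).1]; exact (hpbd _).2
    have h2 : |(inner ℝ (ρ v x) (ν x) : ℝ)| ≤ ‖ρ v x‖ := by
      calc |(inner ℝ (ρ v x) (ν x) : ℝ)| ≤ ‖ρ v x‖ * ‖ν x‖ := abs_real_inner_le_norm _ _
        _ = ‖ρ v x‖ := by rw [hx, mul_one]
    exact mul_le_mul h1 h2 (abs_nonneg _) hpstar
  -- integrability of the second-kind integrands
  have hInt_b : ∀ (z : Lp ℝ 2 μ) (u : V) (w : ℝ) (v : V),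
      Integrable (fun x => μf (‖ρ u x - (inner ℝ (ρ u x) (ν x) : ℝ) • ν x‖) w *
        p (z x - g x) * ‖ρ v x - (inner ℝ (ρ v x) (ν x) : ℝ) • ν x‖) μ := by
    intro z u w v
    refine Integrable.mono' (((hRint v).norm).const_mul (μstar * pstar))
      (((hMm u w).mul (hPm z)).mul (hTm v).norm) ?_
    filter_upwards [hν1] with x hx
    rw [Real.norm_eq_abs, abs_mul, abs_mul]
    have h1 : |μf (‖ρ u x - (inner ℝ (ρ u x) (ν x) : ℝ) • ν x‖) w| ≤ μstar := by
      rw [abs_of_nonneg (hμbd _ _ (norm_nonneg _)).1]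
      exact (hμbd _ _ (norm_nonneg _)).2
    have h2 : |p (z x - g x)| ≤ pstar := by
      rw [abs_of_nonneg (hpbd _).1]; exact (hpbd _).2
    have h3 : |‖ρ v x - (inner ℝ (ρ v x) (ν x) : ℝ) • ν x‖| ≤ ‖ρ v x‖ := by
      rw [abs_of_nonneg (norm_nonneg _)]; exact projBound _ _ hx
    calc |μf _ w| * |p (z x - g x)| * |‖ρ v x - (inner ℝ (ρ v x) (ν x) : ℝ) • ν x‖|
        ≤ μstar * pstar * ‖ρ v x‖ :=
          mul_le_mul (mul_le_mul h1 h2 (abs_nonneg _) hμstar) h3 (abs_nonneg _)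
            (mul_nonneg hμstar hpstar)
      _ = μstar * pstar * ‖ρ v x‖ := rfl
  -- memLp of differences
  have hZ : MemLp (fun x => z₁ x - z₂ x) (2 : ℝ≥0∞) μ := (Lp.memLp z₁).sub (Lp.memLp z₂)
  have hD : MemLp (fun x => ρ d₁ x - ρ d₂ x) (2 : ℝ≥0∞) μ :=
    (Lp.memLp (ρ d₁)).sub (Lp.memLp (ρ d₂))
  have hU : MemLp (fun x => ρ u₁ x - ρ u₂ x) (2 : ℝ≥0∞) μ :=
    (Lp.memLp (ρ u₁)).sub (Lp.memLp (ρ u₂))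
  have hI1 : Integrable (fun x => ‖z₁ x - z₂ x‖ * ‖ρ d₁ x - ρ d₂ x‖) μ := csIntegrable hZ hD
  have hI2 : Integrable (fun x => ‖ρ u₁ x - ρ u₂ x‖ * ‖ρ d₁ x - ρ d₂ x‖) μ := csIntegrable hU hD
  have hI3 : Integrable (fun x => ‖ρ d₁ x - ρ d₂ x‖) μ := (hD.integrable one_le_two).norm
  -- norms of the Lp differences
  have eZ : (eLpNorm (fun x => z₁ x - z₂ x) 2 μ).toReal = ‖z₁ - z₂‖ := by
    have h : (fun x => z₁ x - z₂ x) =ᵐ[μ] ⇑(z₁ - z₂) := (Lp.coeFn_sub z₁ z₂).symm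
    rw [eLpNorm_congr_ae h, ← Lp.norm_def]
  have eD : (eLpNorm (fun x => ρ d₁ x - ρ d₂ x) 2 μ).toReal = ‖ρ (d₁ - d₂)‖ := by
    have h : (fun x => ρ d₁ x - ρ d₂ x) =ᵐ[μ] ⇑(ρ (d₁ - d₂)) := by
      rw [map_sub]; exact (Lp.coeFn_sub (ρ d₁) (ρ d₂)).symm
    rw [eLpNorm_congr_ae h, ← Lp.norm_def]
  have eU : (eLpNorm (fun x => ρ u₁ x - ρ u₂ x) 2 μ).toReal = ‖ρ (u₁ - u₂)‖ := by
    have h : (fun x => ρ u₁ x - ρ u₂ x) =ᵐ[μ] ⇑(ρ (u₁ - u₂)) := by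
      rw [map_sub]; exact (Lp.coeFn_sub (ρ u₁) (ρ u₂)).symm
    rw [eLpNorm_congr_ae h, ← Lp.norm_def]
  have hDop : ‖ρ (d₁ - d₂)‖ ≤ ‖ρ‖ * ‖d₁ - d₂‖ := ρ.le_opNorm _
  have hUop : ‖ρ (u₁ - u₂)‖ ≤ ‖ρ‖ * ‖u₁ - u₂‖ := ρ.le_opNorm _
  -- the three integral bounds
  have hB1 : ∫ x, ‖z₁ x - z₂ x‖ * ‖ρ d₁ x - ρ d₂ x‖ ∂μ ≤ ‖z₁ - z₂‖ * (‖ρ‖ * ‖d₁ - d₂‖) := by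
    refine (csBound hZ hD).trans ?_
    rw [eZ, eD]
    exact mul_le_mul_of_nonneg_left hDop (norm_nonneg _)
  have hB2 : ∫ x, ‖ρ u₁ x - ρ u₂ x‖ * ‖ρ d₁ x - ρ d₂ x‖ ∂μ ≤
      (‖ρ‖ * ‖u₁ - u₂‖) * (‖ρ‖ * ‖d₁ - d₂‖) := by
    refine (csBound hU hD).trans ?_
    rw [eU, eD]
    exact mul_le_mul hUop hDop (norm_nonneg _) (by positivity)
  have hB3 : ∫ x, ‖ρ d₁ x - ρ d₂ x‖ ∂μ ≤
      Real.sqrt (μ Set.univ).toReal * (‖ρ‖ * ‖d₁ - d₂‖) := by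
    have h1 : ∫ x, ‖ρ d₁ x - ρ d₂ x‖ ∂μ
        = ∫ x, ‖(fun _ : Γ => (1:ℝ)) x‖ * ‖ρ d₁ x - ρ d₂ x‖ ∂μ := by simp
    rw [h1]
    refine (csBound (memLp_const 1) hD).trans ?_
    rw [eD]
    have e1 : (eLpNorm (fun _ : Γ => (1:ℝ)) 2 μ).toReal = Real.sqrt (μ Set.univ).toReal := by
      rw [eLpNorm_const' (1:ℝ) two_ne_zero ENNReal.ofNat_ne_top]
      simp only [enorm_one, one_mul]
      rw [← ENNReal.toReal_rpow, Real.sqrt_eq_rpow]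
      norm_num
    rw [e1]
    exact mul_le_mul_of_nonneg_left hDop (Real.sqrt_nonneg _)
  -- rewrite j and combine the integrals
  rw [hj z₁ u₁ w₁ d₂, hj z₁ u₁ w₁ d₁, hj z₂ u₂ w₂ d₁, hj z₂ u₂ w₂ d₂,
      integralCombine (hInt_a z₁ d₂) (hInt_a z₁ d₁) (hInt_a z₂ d₁) (hInt_a z₂ d₂)
        (hInt_b z₁ u₁ w₁ d₂) (hInt_b z₁ u₁ w₁ d₁) (hInt_b z₂ u₂ w₂ d₁) (hInt_b z₂ u₂ w₂ d₂)]
  -- bound the combined integrand pointwise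
  have hFint : Integrable (fun x =>
      (p (z₁ x - g x) * (inner ℝ (ρ d₂ x) (ν x) : ℝ)
        - p (z₁ x - g x) * (inner ℝ (ρ d₁ x) (ν x) : ℝ)
        + p (z₂ x - g x) * (inner ℝ (ρ d₁ x) (ν x) : ℝ)
        - p (z₂ x - g x) * (inner ℝ (ρ d₂ x) (ν x) : ℝ))
      + (μf (‖ρ u₁ x - (inner ℝ (ρ u₁ x) (ν x) : ℝ) • ν x‖) w₁ * p (z₁ x - g x) *
            ‖ρ d₂ x - (inner ℝ (ρ d₂ x) (ν x) : ℝ) • ν x‖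
         - μf (‖ρ u₁ x - (inner ℝ (ρ u₁ x) (ν x) : ℝ) • ν x‖) w₁ * p (z₁ x - g x) *
            ‖ρ d₁ x - (inner ℝ (ρ d₁ x) (ν x) : ℝ) • ν x‖
         + μf (‖ρ u₂ x - (inner ℝ (ρ u₂ x) (ν x) : ℝ) • ν x‖) w₂ * p (z₂ x - g x) *
            ‖ρ d₁ x - (inner ℝ (ρ d₁ x) (ν x) : ℝ) • ν x‖
         - μf (‖ρ u₂ x - (inner ℝ (ρ u₂ x) (ν x) : ℝ) • ν x‖) w₂ * p (z₂ x - g x) *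
            ‖ρ d₂ x - (inner ℝ (ρ d₂ x) (ν x) : ℝ) • ν x‖)) μ :=
    ((((hInt_a z₁ d₂).sub (hInt_a z₁ d₁)).add (hInt_a z₂ d₁)).sub (hInt_a z₂ d₂)).add
      ((((hInt_b z₁ u₁ w₁ d₂).sub (hInt_b z₁ u₁ w₁ d₁)).add (hInt_b z₂ u₂ w₂ d₁)).sub
        (hInt_b z₂ u₂ w₂ d₂))
  have hGint : Integrable (fun x =>
      Lp' * (1 + μstar) * (‖z₁ x - z₂ x‖ * ‖ρ d₁ x - ρ d₂ x‖)
      + Lμ * pstar * (‖ρ u₁ x - ρ u₂ x‖ * ‖ρ d₁ x - ρ d₂ x‖)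
      + Lμ * pstar * |w₁ - w₂| * ‖ρ d₁ x - ρ d₂ x‖) μ :=
    ((hI1.const_mul _).add (hI2.const_mul _)).add (hI3.const_mul _)
  have hmono : (∫ x,
      ((p (z₁ x - g x) * (inner ℝ (ρ d₂ x) (ν x) : ℝ)
        - p (z₁ x - g x) * (inner ℝ (ρ d₁ x) (ν x) : ℝ)
        + p (z₂ x - g x) * (inner ℝ (ρ d₁ x) (ν x) : ℝ)
        - p (z₂ x - g x) * (inner ℝ (ρ d₂ x) (ν x) : ℝ))
      + (μf (‖ρ u₁ x - (inner ℝ (ρ u₁ x) (ν x) : ℝ) • ν x‖) w₁ * p (z₁ x - g x) *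
            ‖ρ d₂ x - (inner ℝ (ρ d₂ x) (ν x) : ℝ) • ν x‖
         - μf (‖ρ u₁ x - (inner ℝ (ρ u₁ x) (ν x) : ℝ) • ν x‖) w₁ * p (z₁ x - g x) *
            ‖ρ d₁ x - (inner ℝ (ρ d₁ x) (ν x) : ℝ) • ν x‖
         + μf (‖ρ u₂ x - (inner ℝ (ρ u₂ x) (ν x) : ℝ) • ν x‖) w₂ * p (z₂ x - g x) *
            ‖ρ d₁ x - (inner ℝ (ρ d₁ x) (ν x) : ℝ) • ν x‖
         - μf (‖ρ u₂ x - (inner ℝ (ρ u₂ x) (ν x) : ℝ) • ν x‖) w₂ * p (z₂ x - g x) *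
            ‖ρ d₂ x - (inner ℝ (ρ d₂ x) (ν x) : ℝ) • ν x‖)) ∂μ) ≤
      ∫ x, (Lp' * (1 + μstar) * (‖z₁ x - z₂ x‖ * ‖ρ d₁ x - ρ d₂ x‖)
      + Lμ * pstar * (‖ρ u₁ x - ρ u₂ x‖ * ‖ρ d₁ x - ρ d₂ x‖)
      + Lμ * pstar * |w₁ - w₂| * ‖ρ d₁ x - ρ d₂ x‖) ∂μ := by
    refine integral_mono_ae hFint hGint ?_
    filter_upwards [hν1] with x hx
    exact pointwiseEst p μf Lp' pstar Lμ μstar hLp'.le hμstar hpstar hLμ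
      hplip hpbd hμbd hμlip (ν x) hx (ρ d₁ x) (ρ d₂ x) (ρ u₁ x) (ρ u₂ x)
      (z₁ x) (z₂ x) (g x) w₁ w₂
  refine hmono.trans ?_
  have hJ1 : Integrable (fun x => Lp' * (1 + μstar) * (‖z₁ x - z₂ x‖ * ‖ρ d₁ x - ρ d₂ x‖)) μ :=
    hI1.const_mul _
  have hJ2 : Integrable (fun x => Lμ * pstar * (‖ρ u₁ x - ρ u₂ x‖ * ‖ρ d₁ x - ρ d₂ x‖)) μ :=
    hI2.const_mul _
  have hJ3 : Integrable (fun x => Lμ * pstar * |w₁ - w₂| * ‖ρ d₁ x - ρ d₂ x‖) μ :=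
    hI3.const_mul _
  have hJ12 : Integrable (fun x => Lp' * (1 + μstar) * (‖z₁ x - z₂ x‖ * ‖ρ d₁ x - ρ d₂ x‖)
      + Lμ * pstar * (‖ρ u₁ x - ρ u₂ x‖ * ‖ρ d₁ x - ρ d₂ x‖)) μ := hJ1.add hJ2
  rw [integral_add hJ12 hJ3, integral_add hJ1 hJ2,
      integral_const_mul, integral_const_mul, integral_const_mul]
  have c1 : (0:ℝ) ≤ Lp' * (1 + μstar) := by positivity
  have c2 : (0:ℝ) ≤ Lμ * pstar := mul_nonneg hLμ hpstar
  have c3 : (0:ℝ) ≤ Lμ * pstar * |w₁ - w₂| := mul_nonneg c2 (abs_nonneg _)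
  calc Lp' * (1 + μstar) * ∫ x, ‖z₁ x - z₂ x‖ * ‖ρ d₁ x - ρ d₂ x‖ ∂μ
        + Lμ * pstar * ∫ x, ‖ρ u₁ x - ρ u₂ x‖ * ‖ρ d₁ x - ρ d₂ x‖ ∂μ
        + Lμ * pstar * |w₁ - w₂| * ∫ x, ‖ρ d₁ x - ρ d₂ x‖ ∂μ
      ≤ Lp' * (1 + μstar) * (‖z₁ - z₂‖ * (‖ρ‖ * ‖d₁ - d₂‖))
        + Lμ * pstar * ((‖ρ‖ * ‖u₁ - u₂‖) * (‖ρ‖ * ‖d₁ - d₂‖))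
        + Lμ * pstar * |w₁ - w₂| * (Real.sqrt (μ Set.univ).toReal * (‖ρ‖ * ‖d₁ - d₂‖)) :=
        add_le_add (add_le_add (mul_le_mul_of_nonneg_left hB1 c1)
          (mul_le_mul_of_nonneg_left hB2 c2)) (mul_le_mul_of_nonneg_left hB3 c3)
    _ = Lp' * ‖ρ‖ * (1 + μstar) * ‖z₁ - z₂‖ * ‖d₁ - d₂‖ +
        Lμ * pstar * ‖ρ‖ ^ 2 * ‖u₁ - u₂‖ * ‖d₁ - d₂‖ +
        Lμ * pstar * ‖ρ‖ * Real.sqrt (μ Set.univ).toReal * |w₁ - w₂| * ‖d₁ - d₂‖ := by ring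
end
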